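/- arXiv:1706.04537 — 4 statements merged into one kernel-verified Lean document; each statement's English description precedes it below -/
import Mathlib

section
/- Every finite simple connected chordal graph can be reduced, through a finite sequence of erasures (each step deleting a single exposed edge of the current graph), to a spanning tree (a connected acyclic graph on the same vertex set). -/
variable {V : Type*}

/-- A maximal clique of `G`: a clique not properly contained in any other clique. -/
def IsMaxClique (G : SimpleGraph V) (s : Set V) : Prop :=
  G.IsClique s ∧ ∀ t : Set V, G.IsClique t → s ⊆ t → t = s

/-- `xy` is a facet edge of `G` if it is an edge and `{x, y}` is a maximal clique. -/
def IsFacetEdge (G : SimpleGraph V) (x y : V) : Prop :=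
  G.Adj x y ∧ IsMaxClique G {x, y}

/-- `xy` is an exposed edge of `G` if it is an edge contained in a unique maximal
clique and it is not a facet edge. -/
def IsExposedEdge (G : SimpleGraph V) (x y : V) : Prop :=
  G.Adj x y ∧ (∃! s : Set V, IsMaxClique G s ∧ x ∈ s ∧ y ∈ s) ∧ ¬ IsFacetEdge G x y

/-- A graph is chordal if every cycle of length at least four has a chord, i.e. an
edge of the graph joining two vertices of the cycle which is not an edge of the cycle. -/
def IsChordal (G : SimpleGraph V) : Prop :=
  ∀ ⦃v : V⦄ (w : G.Walk v v), w.IsCycle → 4 ≤ w.length →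
    ∃ a b, a ∈ w.support ∧ b ∈ w.support ∧ G.Adj a b ∧ s(a, b) ∉ w.edges

/-- `H` is obtained from `G` through an erasure: deletion of a single exposed edge. -/
def Erasure (G H : SimpleGraph V) : Prop :=
  ∃ x y : V, IsExposedEdge G x y ∧ H = G.deleteEdges {s(x, y)}

open SimpleGraph

/-- restriction of a graph to a vertex set -/
def Grest (G : SimpleGraph V) (A : Set V) : SimpleGraph V where
  Adj x y := G.Adj x y ∧ x ∈ A ∧ y ∈ A
  symm := ⟨fun x y ⟨h, hx, hy⟩ => ⟨h.symm, hy, hx⟩⟩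
  loopless := ⟨fun x ⟨h, _, _⟩ => G.loopless.irrefl x h⟩

lemma grest_le {G : SimpleGraph V} {A : Set V} : Grest G A ≤ G := fun _ _ h => h.1

lemma grest_support_subset {G : SimpleGraph V} {A : Set V} {u v : V}
    (w : (Grest G A).Walk u v) (hu : u ∈ A) : ∀ x ∈ w.support, x ∈ A := by
  induction w with
  | nil => intro x hx; simp at hx; subst hx; exact hu
  | cons h p ih =>
    intro x hx
    rcases List.mem_cons.mp hx with rfl | hx
    · exact hu
    · exact ih h.2.2 x hx

lemma grest_walk_transfer {G : SimpleGraph V} {A B : Set V} {u v : V}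
    (w : (Grest G A).Walk u v) (hsub : ∀ x ∈ w.support, x ∈ B) :
    ∀ e ∈ w.edges, e ∈ (Grest G B).edgeSet := by
  intro e he
  induction e using Sym2.ind with
  | _ a b =>
    have hadj : (Grest G A).Adj a b := w.edges_subset_edgeSet he
    exact ⟨hadj.1, hsub a (w.fst_mem_support_of_mem_edges he),
      hsub b (w.snd_mem_support_of_mem_edges he)⟩

lemma isChordal_grest {G : SimpleGraph V} (hch : IsChordal G) (A : Set V) :
    IsChordal (Grest G A) := by
  intro v w hcyc hlen
  have hsub : ∀ e ∈ w.edges, e ∈ G.edgeSet := by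
    intro e he
    exact SimpleGraph.edgeSet_mono grest_le (w.edges_subset_edgeSet he)
  have hA : ∀ x ∈ w.support, x ∈ A := by
    cases w with
    | nil => simp at hcyc
    | cons h p =>
      intro x hx
      exact grest_support_subset _ h.2.1 x hx
  obtain ⟨a, b, ha, hb, hab, hne⟩ := hch (w.transfer G hsub) (hcyc.transfer hsub)
    (by rwa [SimpleGraph.Walk.length_transfer])
  rw [SimpleGraph.Walk.support_transfer] at ha hb
  rw [SimpleGraph.Walk.edges_transfer] at hne
  exact ⟨a, b, ha, hb, ⟨hab, hA a ha, hA b hb⟩, hne⟩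

/-- every clique extends to a maximal clique -/
lemma exists_maxclique_superset (G : SimpleGraph V) {s : Set V} (hs : G.IsClique s) :
    ∃ K : Set V, IsMaxClique G K ∧ s ⊆ K := by
  obtain ⟨m, hsm, hm⟩ := zorn_subset_nonempty {t : Set V | G.IsClique t}
    (fun c hc hchain _ => ⟨⋃₀ c, by
      intro x hx y hy hne
      obtain ⟨t1, ht1, hx1⟩ := hx
      obtain ⟨t2, ht2, hy2⟩ := hy
      rcases eq_or_ne t1 t2 with rfl | hne12
      · exact hc ht1 hx1 hy2 hne
      · rcases hchain ht1 ht2 hne12 with h12 | h12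
        · exact hc ht2 (h12 hx1) hy2 hne
        · exact hc ht1 hx1 (h12 hy2) hne,
      fun t ht => Set.subset_sUnion_of_mem ht⟩) s hs
  exact ⟨m, ⟨hm.1, fun t ht hsub => (hm.2 ht hsub).antisymm hsub⟩, hsm⟩

/-- a simplicial vertex with two distinct neighbors yields an exposed edge -/
lemma exposed_of_simplicial (G : SimpleGraph V) {v y z : V} (hyz : y ≠ z)
    (hy : G.Adj v y) (hz : G.Adj v z)
    (hsimp : ∀ a b, G.Adj v a → G.Adj v b → a ≠ b → G.Adj a b) :
    IsExposedEdge G v y := by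
  set K : Set V := {x | x = v ∨ G.Adj v x} with hK
  have hvK : v ∈ K := Or.inl rfl
  have hKclique : G.IsClique K := by
    intro a ha b hb hne
    rcases ha with rfl | ha
    · rcases hb with rfl | hb
      · exact absurd rfl hne
      · exact hb
    · rcases hb with rfl | hb
      · exact ha.symm
      · exact hsimp a b ha hb hne
  have hsubK : ∀ t : Set V, G.IsClique t → v ∈ t → t ⊆ K := by
    intro t ht hvt c hc
    rcases eq_or_ne c v with rfl | hne
    · exact Or.inl rfl
    · exact Or.inr (ht hvt hc (Ne.symm hne))
  have hKmax : IsMaxClique G K := by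
    refine ⟨hKclique, fun t ht hsub => ?_⟩
    exact Set.Subset.antisymm (hsubK t ht (hsub hvK)) hsub
  refine ⟨hy, ⟨K, ⟨hKmax, hvK, Or.inr hy⟩, ?_⟩, ?_⟩
  · rintro s ⟨hsmax, hvs, _⟩
    exact (hsmax.2 K hKclique (hsubK s hsmax.1 hvs)).symm
  · rintro ⟨-, -, hfac⟩
    have := hfac K hKclique (by
      intro c hc
      rcases hc with rfl | hc
      · exact hvK
      · rw [Set.mem_singleton_iff] at hc; subst hc; exact Or.inr hy)
    have hzK : z ∈ K := Or.inr hz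
    rw [this] at hzK
    rcases hzK with h1 | h1
    · exact hz.ne' h1
    · rw [Set.mem_singleton_iff] at h1; exact hyz h1.symm

lemma exists_last_edge {H : SimpleGraph V} {u v : V} (q : H.Walk u v) (hne : u ≠ v) :
    ∃ c, H.Adj u c ∧ s(u, c) ∈ q.edges := by
  cases q with
  | nil => exact absurd rfl hne
  | cons h p => exact ⟨_, h, by simp⟩

/-- any vertex on a cycle has two distinct neighbors -/
lemma cycle_two_neighbors {G : SimpleGraph V} {r v : V} (w : G.Walk r r)
    (hc : w.IsCycle) (hv : v ∈ w.support) : ∃ a b, a ≠ b ∧ G.Adj v a ∧ G.Adj v b := by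
  classical
  obtain ⟨w', hc'⟩ : ∃ w' : G.Walk v v, w'.IsCycle := ⟨w.rotate _ hv, hc.rotate hv⟩
  cases w' with
  | nil => simp at hc'
  | cons h p =>
    obtain ⟨hpath, hne⟩ := (SimpleGraph.Walk.cons_isCycle_iff p h).mp hc'
    obtain ⟨c, hvc, hce⟩ := exists_last_edge p.reverse h.ne
    rw [SimpleGraph.Walk.edges_reverse, List.mem_reverse] at hce
    refine ⟨_, c, ?_, h, hvc⟩
    rintro rfl
    exact hne hce

lemma two_le_length_of_ne {H : SimpleGraph V} {p q : V} (W : H.Walk p q)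
    (hadj : H.Adj p q) (he : s(p, q) ∉ W.edges) : 2 ≤ W.length := by
  cases W with
  | nil => exact absurd rfl hadj.ne
  | cons h W' =>
    cases W' with
    | nil => simp at he
    | cons h2 W'' => simp only [SimpleGraph.Walk.length_cons]; omega

/-- a walk with a chord admits a strictly shorter walk with the same endpoints -/
lemma chord_shortcut {H : SimpleGraph V} {s t c d : V} (P : H.Walk s t)
    (hc : c ∈ P.support) (hd : d ∈ P.support) (hadj : H.Adj c d)
    (he : s(c, d) ∉ P.edges) : ∃ Q : H.Walk s t, Q.length < P.length := by
  classical
  have hPlen : (P.takeUntil c hc).length + (P.dropUntil c hc).length = P.length := by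
    have := congrArg SimpleGraph.Walk.length (P.take_spec hc)
    rwa [SimpleGraph.Walk.length_append] at this
  by_cases hd' : d ∈ (P.dropUntil c hc).support
  · set R := P.dropUntil c hc with hR
    have hRlen : (R.takeUntil d hd').length + (R.dropUntil d hd').length = R.length := by
      have := congrArg SimpleGraph.Walk.length (R.take_spec hd')
      rwa [SimpleGraph.Walk.length_append] at this
    have h2 : 2 ≤ (R.takeUntil d hd').length :=
      two_le_length_of_ne _ hadj
        (fun hmem => he (P.edges_dropUntil_subset hc (R.edges_takeUntil_subset hd' hmem)))
    refine ⟨(P.takeUntil c hc).append (SimpleGraph.Walk.cons hadj (R.dropUntil d hd')), ?_⟩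
    rw [SimpleGraph.Walk.length_append, SimpleGraph.Walk.length_cons]
    omega
  · have hd'' : d ∈ (P.takeUntil c hc).support := by
      have := hd
      rw [← P.take_spec hc, SimpleGraph.Walk.mem_support_append_iff] at this
      rcases this with h1 | h1
      · exact h1
      · exact absurd h1 hd'
    set T := P.takeUntil c hc with hT
    have hTlen : (T.takeUntil d hd'').length + (T.dropUntil d hd'').length = T.length := by
      have := congrArg SimpleGraph.Walk.length (T.take_spec hd'')
      rwa [SimpleGraph.Walk.length_append] at this
    have h2 : 2 ≤ (T.dropUntil d hd'').length :=
      two_le_length_of_ne _ hadj.symm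
        (fun hmem => he (by
          rw [Sym2.eq_swap]
          exact P.edges_takeUntil_subset hc (T.edges_dropUntil_subset hd'' hmem)))
    refine ⟨(T.takeUntil d hd'').append (SimpleGraph.Walk.cons hadj.symm (P.dropUntil c hc)), ?_⟩
    rw [SimpleGraph.Walk.length_append, SimpleGraph.Walk.length_cons]
    omega

lemma two_le_length_of_not_adj {H : SimpleGraph V} {p q : V} (W : H.Walk p q)
    (hne : p ≠ q) (hnadj : ¬ H.Adj p q) : 2 ≤ W.length := by
  cases W with
  | nil => exact absurd rfl hne
  | cons h W' =>
    cases W' with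
    | nil => exact absurd h hnadj
    | cons h2 W'' => simp only [SimpleGraph.Walk.length_cons]; omega

lemma walk_start_mem {G : SimpleGraph V} {U : Set V} {a b : V}
    (w : (Grest G U).Walk a b) (hne : a ≠ b) : a ∈ U := by
  cases w with
  | nil => exact absurd rfl hne
  | cons h p => exact h.2.1

lemma reach_support {H : SimpleGraph V} {u v : V} (w : H.Walk u v) :
    ∀ x ∈ w.support, H.Reachable u x := by
  induction w with
  | nil => intro x hx; simp at hx; subst hx; exact SimpleGraph.Reachable.refl _
  | cons h p ih =>
    intro x hx
    rcases List.mem_cons.mp hx with rfl | hx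
    · exact SimpleGraph.Reachable.refl _
    · exact (SimpleGraph.Adj.reachable h).trans (ih x hx)

lemma walk_head_decomp [DecidableEq V] {H : SimpleGraph V} {u v : V} (W : H.Walk u v)
    (hne : u ≠ v) (hcnt : W.support.count u = 1) :
    ∃ z, H.Adj u z ∧ ∃ q : H.Walk z v, u ∉ q.support := by
  cases W with
  | nil => exact absurd rfl hne
  | cons h q =>
    refine ⟨_, h, q, fun hmem => ?_⟩
    rw [SimpleGraph.Walk.support_cons, List.count_cons_self] at hcnt
    have h1 : 0 < q.support.count u := List.count_pos_iff.mpr hmem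
    omega

lemma sep_neighbor {G : SimpleGraph V} {U : Set V} {s a b : V}
    (hsa : a ≠ s) (hsb : b ≠ s)
    (w : (Grest G (insert s U)).Walk a b)
    (hnr : ¬ (Grest G U).Reachable a b) :
    ∃ z, G.Adj s z ∧ z ∈ U ∧ (Grest G U).Reachable a z := by
  classical
  rcases eq_or_ne a b with rfl | hneab
  · exact absurd (SimpleGraph.Reachable.refl a) hnr
  by_cases hs : s ∈ w.support
  · have hcnt : (w.takeUntil s hs).reverse.support.count s = 1 := by
      rw [SimpleGraph.Walk.support_reverse, List.count_reverse]
      exact w.count_support_takeUntil_eq_one hs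
    obtain ⟨z, hadj, q, hqs⟩ := walk_head_decomp (w.takeUntil s hs).reverse (Ne.symm hsa) hcnt
    have hzU : z ∈ U := by
      rcases hadj.2.2 with h1 | h1
      · exact absurd h1 hadj.ne'
      · exact h1
    have hqsub : ∀ x ∈ q.support, x ∈ U := by
      intro x hx
      have hxi : x ∈ insert s U := grest_support_subset q (Set.mem_insert_iff.mpr (Or.inr hzU)) x hx
      rcases hxi with h1 | h1
      · exact absurd (h1 ▸ hx) hqs
      · exact h1
    have q' := q.transfer (Grest G U) (grest_walk_transfer q hqsub)
    exact ⟨z, hadj.1, hzU, (SimpleGraph.Walk.reachable q').symm⟩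
  · exfalso
    have haU : a ∈ insert s U := walk_start_mem w hneab
    have hsub : ∀ x ∈ w.support, x ∈ U := by
      intro x hx
      rcases grest_support_subset w haU x hx with h1 | h1
      · exact absurd (h1 ▸ hx) hs
      · exact h1
    exact hnr (SimpleGraph.Walk.reachable (w.transfer (Grest G U) (grest_walk_transfer w hsub)))

def SimpIn (G : SimpleGraph V) (A : Set V) (v : V) : Prop :=
  ∀ a b, a ∈ A → b ∈ A → G.Adj v a → G.Adj v b → a ≠ b → G.Adj a b

lemma exists_min_path {H : SimpleGraph V} {s t : V} (h : H.Reachable s t) :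
    ∃ P : H.Walk s t, P.IsPath ∧ ∀ Q : H.Walk s t, P.length ≤ Q.length := by
  classical
  have hex : ∃ n, ∃ w : H.Walk s t, w.length = n := h.elim fun w => ⟨w.length, w, rfl⟩
  obtain ⟨w0, hw0⟩ := Nat.find_spec hex
  refine ⟨w0.bypass, w0.bypass_isPath, fun Q => ?_⟩
  calc w0.bypass.length ≤ w0.length := w0.length_bypass_le
  _ = Nat.find hex := hw0
  _ ≤ Q.length := Nat.find_min' hex ⟨Q, rfl⟩

/-- Dirac: a chordal graph restricted to A is complete or has two nonadjacent
simplicial vertices -/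
theorem dirac_rel [Fintype V] {G : SimpleGraph V} (hch : IsChordal G) (A : Set V) :
    (∀ a ∈ A, ∀ b ∈ A, a ≠ b → G.Adj a b) ∨
      ∃ v w, v ∈ A ∧ w ∈ A ∧ v ≠ w ∧ ¬ G.Adj v w ∧ SimpIn G A v ∧ SimpIn G A w := by
  classical
  suffices H : ∀ (n : ℕ) (A : Set V), A.ncard ≤ n →
      (∀ a ∈ A, ∀ b ∈ A, a ≠ b → G.Adj a b) ∨
      ∃ v w, v ∈ A ∧ w ∈ A ∧ v ≠ w ∧ ¬ G.Adj v w ∧ SimpIn G A v ∧ SimpIn G A w by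
    exact H A.ncard A le_rfl
  intro n
  induction n with
  | zero =>
    intro A hA
    left
    intro a ha
    have : A = ∅ := by
      have := Set.ncard_eq_zero (Set.toFinite A) |>.mp (Nat.le_zero.mp hA)
      exact this
    rw [this] at ha
    exact absurd ha (Set.notMem_empty a)
  | succ n ih =>
    intro A hcard
    by_cases hcomp : ∀ a ∈ A, ∀ b ∈ A, a ≠ b → G.Adj a b
    · exact Or.inl hcomp
    right
    push_neg at hcomp
    obtain ⟨a, ha, b, hb, hab, hnadj⟩ := hcomp
    -- separators of a and b inside A
    set Sep : Set V → Prop := fun S => S ⊆ A ∧ a ∉ S ∧ b ∉ S ∧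
      ¬ (Grest G (A \ S)).Reachable a b with hSepdef
    have hsep0 : Sep (A \ {a, b}) := by
      refine ⟨Set.diff_subset, by simp, by simp, fun hreach => ?_⟩
      obtain ⟨w⟩ := hreach
      cases w with
      | nil => exact hab rfl
      | cons h p =>
        have hz := h.2.2
        simp only [Set.mem_diff, Set.mem_insert_iff, Set.mem_singleton_iff, not_and,
          not_not] at hz
        rcases hz.2 hz.1 with rfl | rfl
        · exact h.1.ne rfl
        · exact hnadj h.1
    have hex : ∃ k, ∃ S, Sep S ∧ S.ncard = k := ⟨_, _, hsep0, rfl⟩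
    set k0 := Nat.find hex with hk0
    obtain ⟨S, hS, hScard⟩ := Nat.find_spec hex
    have hmin : ∀ S', Sep S' → k0 ≤ S'.ncard := fun S' hS' =>
      Nat.find_min' hex ⟨S', hS', rfl⟩
    set B := A \ S with hB
    have haB : a ∈ B := ⟨ha, hS.2.1⟩
    have hbB : b ∈ B := ⟨hb, hS.2.2.1⟩
    have hnr : ¬ (Grest G B).Reachable a b := hS.2.2.2
    -- every separator vertex has neighbors in both components
    have key : ∀ s ∈ S, (∃ z, G.Adj s z ∧ z ∈ B ∧ (Grest G B).Reachable a z) ∧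
        (∃ z, G.Adj s z ∧ z ∈ B ∧ (Grest G B).Reachable b z) := by
      intro s hsS
      have hsA : s ∈ A := hS.1 hsS
      have hS' : ¬ Sep (S \ {s}) := by
        intro hsep'
        have h1 := hmin _ hsep'
        have h2 : (S \ {s}).ncard < S.ncard :=
          Set.ncard_diff_singleton_lt_of_mem hsS (Set.toFinite S)
        omega
      have hBS' : A \ (S \ {s}) = insert s B := by
        ext x
        simp only [Set.mem_diff, Set.mem_singleton_iff, Set.mem_insert_iff, hB, not_and, not_not]
        constructor
        · rintro ⟨hxA, hx⟩
          by_cases hxs : x = s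
          · exact Or.inl hxs
          · by_cases hxS : x ∈ S
            · exact Or.inl (hx hxS)
            · exact Or.inr ⟨hxA, hxS⟩
        · rintro (rfl | ⟨hxA, hxS⟩)
          · exact ⟨hsA, fun _ => rfl⟩
          · exact ⟨hxA, fun h => absurd h hxS⟩
      have hreach' : (Grest G (insert s B)).Reachable a b := by
        rw [← hBS']
        by_contra hcon
        exact hS' ⟨Set.diff_subset.trans hS.1, fun h => hS.2.1 h.1, fun h => hS.2.2.1 h.1, hcon⟩
      obtain ⟨w⟩ := hreach'
      have hsa : a ≠ s := fun h => hS.2.1 (h ▸ hsS)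
      have hsb : b ≠ s := fun h => hS.2.2.1 (h ▸ hsS)
      constructor
      · exact sep_neighbor hsa hsb w hnr
      · obtain ⟨z, h1, h2, h3⟩ := sep_neighbor hsb hsa w.reverse (fun h => hnr h.symm)
        exact ⟨z, h1, h2, h3⟩
    -- the separator is a clique
    have hSclique : ∀ s ∈ S, ∀ t ∈ S, s ≠ t → G.Adj s t := by
      intro s hsS t htS hst
      by_contra hnadjst
      obtain ⟨⟨zsa, hadj_s_zsa, hzsaB, hzsaR⟩, ⟨zsb, hadj_s_zsb, hzsbB, hzsbR⟩⟩ := key s hsS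
      obtain ⟨⟨zta, hadj_t_zta, hztaB, hztaR⟩, ⟨ztb, hadj_t_ztb, hztbB, hztbR⟩⟩ := key t htS
      set Ca : Set V := {x | x ∈ B ∧ (Grest G B).Reachable a x} with hCa
      set Cb : Set V := {x | x ∈ B ∧ (Grest G B).Reachable b x} with hCb
      have hCaCb : ∀ x, x ∈ Ca → x ∈ Cb → False := fun x h1 h2 => hnr (h1.2.trans h2.2.symm)
      set U1 : Set V := Ca ∪ {s, t} with hU1
      set U2 : Set V := Cb ∪ {s, t} with hU2
      have hstmem : ∀ x, x ∈ ({s, t} : Set V) → x = s ∨ x = t := fun x hx => by simpa using hx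
      have hsU1 : s ∈ U1 := Or.inr (Set.mem_insert s _)
      have htU1 : t ∈ U1 := Or.inr (Set.mem_insert_of_mem _ rfl)
      have hsU2 : s ∈ U2 := Or.inr (Set.mem_insert s _)
      have htU2 : t ∈ U2 := Or.inr (Set.mem_insert_of_mem _ rfl)
      have hsnB : s ∉ B := fun h => h.2 hsS
      have htnB : t ∉ B := fun h => h.2 htS
      have hmixed : ∀ c d, c ∈ Ca → d ∈ Cb → G.Adj c d → False := fun c d h1 h2 hadj =>
        hCaCb d ⟨h2.1, h1.2.trans
          (SimpleGraph.Adj.reachable (show (Grest G B).Adj c d from ⟨hadj, h1.1, h2.1⟩))⟩ h2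
      -- connect s to t through Ca
      have hreach1 : (Grest G U1).Reachable s t := by
        have hreachCa : (Grest G B).Reachable zsa zta := hzsaR.symm.trans hztaR
        obtain ⟨w0⟩ := hreachCa
        have hw0sub : ∀ x ∈ w0.support, x ∈ Ca := fun x hx =>
          ⟨grest_support_subset w0 hzsaB x hx, hzsaR.trans (reach_support w0 x hx)⟩
        have w0' := w0.transfer (Grest G U1)
          (grest_walk_transfer w0 (fun x hx => Or.inl (hw0sub x hx)))
        exact (SimpleGraph.Adj.reachable
            (show (Grest G U1).Adj s zsa from ⟨hadj_s_zsa, hsU1, Or.inl ⟨hzsaB, hzsaR⟩⟩)).trans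
          ((SimpleGraph.Walk.reachable w0').trans (SimpleGraph.Adj.reachable
            (show (Grest G U1).Adj zta t from ⟨hadj_t_zta.symm, Or.inl ⟨hztaB, hztaR⟩, htU1⟩)))
      have hreach2 : (Grest G U2).Reachable t s := by
        have hreachCb : (Grest G B).Reachable ztb zsb := hztbR.symm.trans hzsbR
        obtain ⟨w0⟩ := hreachCb
        have hw0sub : ∀ x ∈ w0.support, x ∈ Cb := fun x hx =>
          ⟨grest_support_subset w0 hztbB x hx, hztbR.trans (reach_support w0 x hx)⟩
        have w0' := w0.transfer (Grest G U2)
          (grest_walk_transfer w0 (fun x hx => Or.inl (hw0sub x hx)))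
        exact (SimpleGraph.Adj.reachable
            (show (Grest G U2).Adj t ztb from ⟨hadj_t_ztb, htU2, Or.inl ⟨hztbB, hztbR⟩⟩)).trans
          ((SimpleGraph.Walk.reachable w0').trans (SimpleGraph.Adj.reachable
            (show (Grest G U2).Adj zsb s from ⟨hadj_s_zsb.symm, Or.inl ⟨hzsbB, hzsbR⟩, hsU2⟩)))
      obtain ⟨P1, hP1path, hP1min⟩ := exists_min_path hreach1
      obtain ⟨P2, hP2path, hP2min⟩ := exists_min_path hreach2
      have hlen1 : 2 ≤ P1.length := two_le_length_of_not_adj P1 hst (fun h => hnadjst h.1)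
      have hlen2 : 2 ≤ P2.length := two_le_length_of_not_adj P2 (Ne.symm hst)
        (fun h => hnadjst h.1.symm)
      have hP1U : ∀ x ∈ P1.support, x ∈ U1 := grest_support_subset P1 hsU1
      have hP2U : ∀ x ∈ P2.support, x ∈ U2 := grest_support_subset P2 htU2
      have hU1A : U1 ⊆ A := Set.union_subset (fun x hx => (hx.1 : x ∈ A \ S).1)
        (fun x hx => by rcases hstmem x hx with rfl | rfl; exacts [hS.1 hsS, hS.1 htS])
      have hU2A : U2 ⊆ A := Set.union_subset (fun x hx => (hx.1 : x ∈ A \ S).1)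
        (fun x hx => by rcases hstmem x hx with rfl | rfl; exacts [hS.1 hsS, hS.1 htS])
      set P1' := P1.transfer (Grest G A)
        (grest_walk_transfer P1 (fun x hx => hU1A (hP1U x hx))) with hP1'
      set P2' := P2.transfer (Grest G A)
        (grest_walk_transfer P2 (fun x hx => hU2A (hP2U x hx))) with hP2'
      set C := P1'.append P2' with hC
      have hC_support : C.support = P1.support ++ P2.support.tail := by
        rw [hC, SimpleGraph.Walk.support_append, hP1', hP2',
          SimpleGraph.Walk.support_transfer, SimpleGraph.Walk.support_transfer]
      have hC_edges : C.edges = P1.edges ++ P2.edges := by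
        rw [hC, SimpleGraph.Walk.edges_append, hP1', hP2',
          SimpleGraph.Walk.edges_transfer, SimpleGraph.Walk.edges_transfer]
      have hC_len : C.length = P1.length + P2.length := by
        rw [hC, SimpleGraph.Walk.length_append, hP1', hP2',
          SimpleGraph.Walk.length_transfer, SimpleGraph.Walk.length_transfer]
      have hs1 : s ∈ P1.support := P1.start_mem_support
      have ht1 : t ∈ P1.support := P1.end_mem_support
      have ht2 : t ∈ P2.support := P2.start_mem_support
      have hs2 : s ∈ P2.support := P2.end_mem_support
      have hboth : ∀ x, x ∈ P1.support → x ∈ P2.support → x = s ∨ x = t := by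
        intro x h1 h2
        rcases hP1U x h1 with hx1 | hx1
        · rcases hP2U x h2 with hx2 | hx2
          · exact absurd (hCaCb x hx1 hx2) not_false
          · exact hstmem x hx2
        · exact hstmem x hx1
      have hsnt1 : s ∉ P1.support.tail := by
        have := hP1path.support_nodup
        rw [P1.support_eq_cons] at this
        exact (List.nodup_cons.mp this).1
      have htnt2 : t ∉ P2.support.tail := by
        have := hP2path.support_nodup
        rw [P2.support_eq_cons] at this
        exact (List.nodup_cons.mp this).1
      have htail_sub1 : P1.support.tail ⊆ P1.support := by
        rw [P1.support_eq_cons]; exact List.subset_cons_self _ _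
      have htail_sub2 : P2.support.tail ⊆ P2.support := by
        rw [P2.support_eq_cons]; exact List.subset_cons_self _ _
      have hCcycle : C.IsCycle := by
        rw [SimpleGraph.Walk.isCycle_def]
        refine ⟨?_, ?_, ?_⟩
        · rw [SimpleGraph.Walk.isTrail_def, hC_edges]
          refine List.Nodup.append hP1path.isTrail.edges_nodup hP2path.isTrail.edges_nodup ?_
          intro e he1 he2
          induction e using Sym2.ind with
          | _ c d =>
            have hc12 := hboth c (P1.fst_mem_support_of_mem_edges he1)
              (P2.fst_mem_support_of_mem_edges he2)
            have hd12 := hboth d (P1.snd_mem_support_of_mem_edges he1)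
              (P2.snd_mem_support_of_mem_edges he2)
            have hadjcd : G.Adj c d := (P1.edges_subset_edgeSet he1 :
              (Grest G U1).Adj c d).1
            rcases hc12 with rfl | rfl <;> rcases hd12 with rfl | rfl
            · exact hadjcd.ne rfl
            · exact hnadjst hadjcd
            · exact hnadjst hadjcd.symm
            · exact hadjcd.ne rfl
        · intro h
          have h2 := congrArg SimpleGraph.Walk.length h
          rw [hC_len, SimpleGraph.Walk.length_nil] at h2
          omega
        · have : C.support.tail = P1.support.tail ++ P2.support.tail := by
            rw [hC_support, P1.support_eq_cons]
            rfl
          rw [this]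
          refine List.Nodup.append (hP1path.support_nodup.tail) (hP2path.support_nodup.tail) ?_
          intro x hx1 hx2
          rcases hboth x (htail_sub1 hx1) (htail_sub2 hx2) with rfl | rfl
          · exact hsnt1 hx1
          · exact htnt2 hx2
      obtain ⟨c, d, hcC, hdC, hadjcd, hecd⟩ := (isChordal_grest hch A) C hCcycle
        (by rw [hC_len]; omega)
      rw [hC_support, List.mem_append] at hcC hdC
      have hshort1 : c ∈ P1.support → d ∈ P1.support → False := by
        intro hc hd
        have hadj1 : (Grest G U1).Adj c d := ⟨hadjcd.1, hP1U c hc, hP1U d hd⟩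
        have hne1 : s(c, d) ∉ P1.edges := fun hmem =>
          hecd (by rw [hC_edges]; exact List.mem_append_left _ hmem)
        obtain ⟨Q, hQ⟩ := chord_shortcut P1 hc hd hadj1 hne1
        exact absurd (hP1min Q) (by omega)
      have hshort2 : c ∈ P2.support → d ∈ P2.support → False := by
        intro hc hd
        have hadj2 : (Grest G U2).Adj c d := ⟨hadjcd.1, hP2U c hc, hP2U d hd⟩
        have hne2 : s(c, d) ∉ P2.edges := fun hmem =>
          hecd (by rw [hC_edges]; exact List.mem_append_right _ hmem)
        obtain ⟨Q, hQ⟩ := chord_shortcut P2 hc hd hadj2 hne2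
        exact absurd (hP2min Q) (by omega)
      have honly : ∀ x, x ∈ P1.support → x ∉ P2.support → x ∈ Ca := by
        intro x h1 h2
        rcases hP1U x h1 with hx | hx
        · exact hx
        · rcases hstmem x hx with rfl | rfl
          · exact absurd hs2 h2
          · exact absurd ht2 h2
      have honly2 : ∀ x, x ∈ P2.support → x ∉ P1.support → x ∈ Cb := by
        intro x h1 h2
        rcases hP2U x h1 with hx | hx
        · exact hx
        · rcases hstmem x hx with rfl | rfl
          · exact absurd hs1 h2
          · exact absurd ht1 h2
      by_cases hc1 : c ∈ P1.support <;> by_cases hd1 : d ∈ P1.support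
      · exact hshort1 hc1 hd1
      · have hd2 : d ∈ P2.support := htail_sub2 (hdC.resolve_left hd1)
        by_cases hc2 : c ∈ P2.support
        · exact hshort2 hc2 hd2
        · exact hmixed c d (honly c hc1 hc2) (honly2 d hd2 hd1) hadjcd.1
      · have hc2 : c ∈ P2.support := htail_sub2 (hcC.resolve_left hc1)
        by_cases hd2 : d ∈ P2.support
        · exact hshort2 hc2 hd2
        · exact hmixed d c (honly d hd1 hd2) (honly2 c hc2 hc1) hadjcd.1.symm
      · exact hshort2 (htail_sub2 (hcC.resolve_left hc1)) (htail_sub2 (hdC.resolve_left hd1))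
    -- produce a simplicial vertex in the component of any c that misses some d
    have getsimp : ∀ c d : V, c ∈ B → d ∈ B → ¬ (Grest G B).Reachable c d →
        ∃ v, v ∈ B ∧ (Grest G B).Reachable c v ∧ SimpIn G A v := by
      intro c d hcB hdB hnrcd
      set Cc : Set V := {x | x ∈ B ∧ (Grest G B).Reachable c x} with hCc
      have hCcB : Cc ⊆ B := fun x hx => hx.1
      have hsub : Cc ∪ S ⊆ A := Set.union_subset (hCcB.trans Set.diff_subset) hS.1
      have hdnot : d ∉ Cc ∪ S := by
        rintro (h1 | h1)
        · exact hnrcd h1.2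
        · exact hdB.2 h1
      have hss : Cc ∪ S ⊂ A := ⟨hsub, fun hback => hdnot (hback hdB.1)⟩
      have hlt : (Cc ∪ S).ncard ≤ n := by
        have := Set.ncard_lt_ncard hss (Set.toFinite A)
        omega
      have hclosed : ∀ v, v ∈ Cc → ∀ x, x ∈ A → G.Adj v x → x ∈ Cc ∪ S := by
        intro v hv x hxA hadj
        by_cases hxS : x ∈ S
        · exact Or.inr hxS
        · refine Or.inl ⟨⟨hxA, hxS⟩, hv.2.trans (SimpleGraph.Adj.reachable (show (Grest G B).Adj v x from ⟨hadj, hv.1, hxA, hxS⟩))⟩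
      rcases ih (Cc ∪ S) hlt with hcomp1 | ⟨v, w, hv, hw, hvw, hnadjvw, hsv, hsw⟩
      · -- complete: c itself is simplicial in A
        refine ⟨c, hcB, SimpleGraph.Reachable.refl _, ?_⟩
        intro x y hxA hyA hcx hcy hxy
        have hcCc : c ∈ Cc := ⟨hcB, SimpleGraph.Reachable.refl _⟩
        exact hcomp1 x (hclosed c hcCc x hxA hcx) y (hclosed c hcCc y hyA hcy) hxy
      · -- one of v, w lies in Cc
        have hlift : ∀ u, u ∈ Cc → SimpIn G (Cc ∪ S) u → SimpIn G A u := by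
          intro u hu hsimp x y hxA hyA hux huy hxy
          exact hsimp x y (hclosed u hu x hxA hux) (hclosed u hu y hyA huy) hux huy hxy
        rcases hv with hv1 | hv1
        · exact ⟨v, hv1.1, hv1.2, hlift v hv1 hsv⟩
        · rcases hw with hw1 | hw1
          · exact ⟨w, hw1.1, hw1.2, hlift w hw1 hsw⟩
          · exact absurd (hSclique v hv1 w hw1 hvw) hnadjvw
    obtain ⟨va, hvaB, hvar, hvas⟩ := getsimp a b haB hbB hnr
    obtain ⟨vb, hvbB, hvbr, hvbs⟩ := getsimp b a hbB haB (fun h => hnr h.symm)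
    refine ⟨va, vb, Set.diff_subset hvaB, Set.diff_subset hvbB, ?_, ?_, hvas, hvbs⟩
    · rintro rfl
      exact hnr (hvar.trans hvbr.symm)
    · intro hadj
      exact hnr (hvar.trans ((SimpleGraph.Adj.reachable (show (Grest G B).Adj va vb from ⟨hadj, hvaB, hvbB⟩)).trans hvbr.symm))

lemma no_pendant_neighbor {G : SimpleGraph V} {v u : V}
    (hvu : G.Adj v u) (huniq : ∀ z, G.Adj v z → z = u) :
    ∀ z, ¬ (G.deleteEdges {s(v, u)}).Adj v z := by
  intro z hz
  rw [SimpleGraph.deleteEdges_adj] at hz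
  exact hz.2 (by rw [huniq z hz.1]; rfl)

lemma pendant_not_mem_cycle {G : SimpleGraph V} {v u r : V}
    (hvu : G.Adj v u) (huniq : ∀ z, G.Adj v z → z = u)
    (w : (G.deleteEdges {s(v, u)}).Walk r r) (hc : w.IsCycle) : v ∉ w.support := by
  intro hv
  obtain ⟨a, b, hab, h1, h2⟩ := cycle_two_neighbors w hc hv
  exact no_pendant_neighbor hvu huniq a h1

lemma chordal_deleteEdges_pendant {G : SimpleGraph V} (hch : IsChordal G) {v u : V}
    (hvu : G.Adj v u) (huniq : ∀ z, G.Adj v z → z = u) :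
    IsChordal (G.deleteEdges {s(v, u)}) := by
  intro r w hc hlen
  have hsub : ∀ e ∈ w.edges, e ∈ G.edgeSet := fun e he =>
    SimpleGraph.edgeSet_mono (SimpleGraph.deleteEdges_le _) (w.edges_subset_edgeSet he)
  obtain ⟨a, b, ha, hb, hab, hne⟩ := hch (w.transfer G hsub) (hc.transfer hsub)
    (by rwa [SimpleGraph.Walk.length_transfer])
  rw [SimpleGraph.Walk.support_transfer] at ha hb
  rw [SimpleGraph.Walk.edges_transfer] at hne
  have hvnot : v ∉ w.support := pendant_not_mem_cycle hvu huniq w hc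
  have hno : s(a, b) ∉ ({s(v, u)} : Set (Sym2 V)) := by
    intro hmem
    rw [Set.mem_singleton_iff] at hmem
    have : v ∈ s(a, b) := hmem ▸ Sym2.mem_mk_left v u
    rcases Sym2.mem_iff.mp this with rfl | rfl
    · exact hvnot ha
    · exact hvnot hb
  exact ⟨a, b, ha, hb, SimpleGraph.deleteEdges_adj.mpr ⟨hab, hno⟩, hne⟩

lemma pendant_lift {G : SimpleGraph V} {v u x y : V}
    (hvu : G.Adj v u) (huniq : ∀ z, G.Adj v z → z = u)
    (hexp : IsExposedEdge (G.deleteEdges {s(v, u)}) x y) : IsExposedEdge G x y := by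
  set G' := G.deleteEdges {s(v, u)} with hG'
  obtain ⟨hadj', hunique, hnfac⟩ := hexp
  have hadj'' := SimpleGraph.deleteEdges_adj.mp hadj'
  have hGadj : G.Adj x y := hadj''.1
  have hxv : x ≠ v := by
    rintro rfl
    exact hadj''.2 (by rw [huniq y hGadj]; rfl)
  have hyv : y ≠ v := by
    rintro rfl
    exact hadj''.2 (by rw [Sym2.eq_swap, huniq x hGadj.symm]; rfl)
  have c1 : ∀ t : Set V, G.IsClique t → x ∈ t → y ∈ t → v ∉ t := by
    intro t ht hx hy hv
    have h1 : x = u := huniq x (ht hv hx (Ne.symm hxv))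
    have h2 : y = u := huniq y (ht hv hy (Ne.symm hyv))
    exact hGadj.ne (h1.trans h2.symm)
  have c2 : ∀ t : Set V, G'.IsClique t → x ∈ t → v ∉ t := by
    intro t ht hx hv
    exact no_pendant_neighbor hvu huniq x (ht hv hx (Ne.symm hxv))
  have c3 : ∀ t : Set V, v ∉ t → (G.IsClique t ↔ G'.IsClique t) := by
    intro t hv
    constructor
    · intro ht a haM b hbM hne
      refine SimpleGraph.deleteEdges_adj.mpr ⟨ht haM hbM hne, fun hmem => ?_⟩
      rw [Set.mem_singleton_iff] at hmem
      have : v ∈ s(a, b) := hmem ▸ Sym2.mem_mk_left v u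
      rcases Sym2.mem_iff.mp this with rfl | rfl
      · exact hv haM
      · exact hv hbM
    · exact fun ht => ht.mono (SimpleGraph.deleteEdges_le _)
  have maxT : ∀ s : Set V, x ∈ s → y ∈ s → (IsMaxClique G s ↔ IsMaxClique G' s) := by
    intro s hx hy
    constructor
    · intro h
      refine ⟨(c3 s (c1 s h.1 hx hy)).mp h.1, fun t ht hsub => ?_⟩
      exact h.2 t ((c3 t (c2 t ht (hsub hx))).mpr ht) hsub
    · intro h
      refine ⟨(c3 s (c2 s h.1 hx)).mpr h.1, fun t ht hsub => ?_⟩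
      exact h.2 t ((c3 t (c1 t ht (hsub hx) (hsub hy))).mp ht) hsub
  refine ⟨hGadj, ?_, ?_⟩
  · obtain ⟨K, ⟨hKmax, hKx, hKy⟩, hKuniq⟩ := hunique
    exact ⟨K, ⟨(maxT K hKx hKy).mpr hKmax, hKx, hKy⟩,
      fun s hs => hKuniq s ⟨(maxT s hs.2.1 hs.2.2).mp hs.1, hs.2⟩⟩
  · rintro ⟨-, hmax⟩
    exact hnfac ⟨hadj', (maxT {x, y} (Set.mem_insert x _)
      (Set.mem_insert_of_mem _ rfl)).mp hmax⟩

/-- a finite chordal graph with a cycle has an exposed edge -/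
lemma exists_exposed [Fintype V] {G : SimpleGraph V} (hch : IsChordal G)
    {r : V} (w : G.Walk r r) (hc : w.IsCycle) : ∃ x y, IsExposedEdge G x y := by
  classical
  suffices H : ∀ (n : ℕ) (G : SimpleGraph V), IsChordal G → G.edgeSet.ncard ≤ n →
      ∀ (r : V) (w : G.Walk r r), w.IsCycle → ∃ x y, IsExposedEdge G x y by
    exact H G.edgeSet.ncard G hch le_rfl r w hc
  clear hch w hc G
  intro n
  induction n with
  | zero =>
    intro G hch hcard r w hc
    exfalso
    obtain ⟨e, he⟩ : ∃ e, e ∈ w.edges := by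
      cases w with
      | nil => simp at hc
      | cons h p =>
        exact ⟨_, by rw [SimpleGraph.Walk.edges_cons]; exact List.mem_cons_self⟩
    have h1 : 0 < G.edgeSet.ncard :=
      Set.ncard_pos (Set.toFinite _) |>.mpr ⟨e, w.edges_subset_edgeSet he⟩
    omega
  | succ n ih =>
    intro G hch hcard r w hc
    by_cases hpend : ∃ v u, G.Adj v u ∧ ∀ z, G.Adj v z → z = u
    · obtain ⟨v, u, hvu, huniq⟩ := hpend
      have hvnot : v ∉ w.support := by
        intro hv
        obtain ⟨a, b, hab, h1, h2⟩ := cycle_two_neighbors w hc hv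
        exact hab ((huniq a h1).trans (huniq b h2).symm)
      have hsub : ∀ e ∈ w.edges, e ∈ (G.deleteEdges {s(v, u)}).edgeSet := by
        intro e he
        induction e using Sym2.ind with
        | _ c d =>
          have hcd : G.Adj c d := w.edges_subset_edgeSet he
          refine SimpleGraph.deleteEdges_adj.mpr ⟨hcd, fun hmem => ?_⟩
          rw [Set.mem_singleton_iff] at hmem
          have : v ∈ s(c, d) := hmem ▸ Sym2.mem_mk_left v u
          rcases Sym2.mem_iff.mp this with rfl | rfl
          · exact hvnot (w.fst_mem_support_of_mem_edges he)
          · exact hvnot (w.snd_mem_support_of_mem_edges he)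
      have hcard' : (G.deleteEdges {s(v, u)}).edgeSet.ncard ≤ n := by
        have hss : (G.deleteEdges {s(v, u)}).edgeSet ⊂ G.edgeSet := by
          refine ⟨SimpleGraph.edgeSet_mono (SimpleGraph.deleteEdges_le _), fun hback => ?_⟩
          have h1 : s(v, u) ∈ G.edgeSet := hvu
          have h2 := hback h1
          rw [SimpleGraph.mem_edgeSet, SimpleGraph.deleteEdges_adj] at h2
          exact h2.2 rfl
        have := Set.ncard_lt_ncard hss (Set.toFinite _)
        omega
      obtain ⟨x, y, hexp⟩ := ih (G.deleteEdges {s(v, u)})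
        (chordal_deleteEdges_pendant hch hvu huniq) hcard' r
        (w.transfer _ hsub) (hc.transfer hsub)
      exact ⟨x, y, pendant_lift hvu huniq hexp⟩
    · push_neg at hpend
      set A : Set V := {x | G.Reachable r x} with hA
      have hrA : r ∈ A := SimpleGraph.Reachable.refl r
      have hclosed : ∀ p, p ∈ A → ∀ q, G.Adj p q → q ∈ A := fun p hp q hadj =>
        hp.trans hadj.reachable
      obtain ⟨a, b, hab, hra, hrb⟩ := cycle_two_neighbors w hc w.start_mem_support
      rcases dirac_rel hch A with hcomp | ⟨v, -, hvA, -, -, -, hsv, -⟩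
      · refine ⟨r, a, exposed_of_simplicial G hab hra hrb ?_⟩
        intro c d hrc hrd hne
        exact hcomp c (hclosed r hrA c hrc) d (hclosed r hrA d hrd) hne
      · -- v is simplicial in its component; v has a neighbor
        have hvnbr : ∃ z, G.Adj v z := by
          obtain ⟨q⟩ := hvA.symm
          cases q with
          | nil => exact ⟨a, hra⟩
          | cons h p => exact ⟨_, h⟩
        obtain ⟨z1, hz1⟩ := hvnbr
        obtain ⟨z2, hz2, hz21⟩ := hpend v z1 hz1
        refine ⟨v, z1, exposed_of_simplicial G (Ne.symm hz21) hz1 hz2 ?_⟩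
        intro c d hvc hvd hne
        exact hsv c d (hclosed v hvA c hvc) (hclosed v hvA d hvd) hvc hvd hne

lemma exposed_common_neighbor {G : SimpleGraph V} {x y : V} (hexp : IsExposedEdge G x y) :
    ∃ z, z ≠ x ∧ z ≠ y ∧ G.Adj x z ∧ G.Adj y z := by
  obtain ⟨hadj, ⟨K, ⟨hKmax, hKx, hKy⟩, -⟩, hnfac⟩ := hexp
  have hKne : K ≠ {x, y} := fun h => hnfac ⟨hadj, h ▸ hKmax⟩
  obtain ⟨z, hzK, hz⟩ : ∃ z ∈ K, z ∉ ({x, y} : Set V) := by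
    by_contra hcon
    push_neg at hcon
    refine hKne (Set.Subset.antisymm hcon ?_)
    rintro c (rfl | hc)
    · exact hKx
    · rw [Set.mem_singleton_iff] at hc; subst hc; exact hKy
  simp only [Set.mem_insert_iff, Set.mem_singleton_iff, not_or] at hz
  exact ⟨z, hz.1, hz.2, hKmax.1 hKx hzK (Ne.symm hz.1), hKmax.1 hKy hzK (Ne.symm hz.2)⟩

lemma connected_deleteEdges_exposed {G : SimpleGraph V} (hconn : G.Connected)
    {x y : V} (hexp : IsExposedEdge G x y) :
    (G.deleteEdges {s(x, y)}).Connected := by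
  obtain ⟨z, hzx, hzy, hxz, hyz⟩ := exposed_common_neighbor hexp
  have hG'xz : (G.deleteEdges {s(x, y)}).Adj x z := by
    refine SimpleGraph.deleteEdges_adj.mpr ⟨hxz, fun hmem => ?_⟩
    rw [Set.mem_singleton_iff, Sym2.congr_right] at hmem
    exact hzy hmem
  have hG'yz : (G.deleteEdges {s(x, y)}).Adj y z := by
    refine SimpleGraph.deleteEdges_adj.mpr ⟨hyz, fun hmem => ?_⟩
    rw [Set.mem_singleton_iff] at hmem
    rw [Sym2.eq_swap, Sym2.congr_left] at hmem
    exact hzx hmem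
  have hadjstep : ∀ p q, G.Adj p q → (G.deleteEdges {s(x, y)}).Reachable p q := by
    intro p q hpq
    by_cases hmem : s(p, q) = s(x, y)
    · rcases Sym2.eq_iff.mp hmem with ⟨rfl, rfl⟩ | ⟨rfl, rfl⟩
      · exact hG'xz.reachable.trans hG'yz.reachable.symm
      · exact hG'yz.reachable.trans hG'xz.reachable.symm
    · exact (SimpleGraph.deleteEdges_adj.mpr ⟨hpq, by simpa using hmem⟩).reachable
  rw [SimpleGraph.connected_iff]
  refine ⟨fun p q => ?_, hconn.nonempty⟩
  obtain ⟨wpq⟩ := hconn p q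
  induction wpq with
  | nil => exact SimpleGraph.Reachable.refl _
  | cons h p ih => exact (hadjstep _ _ h).trans ih

lemma adj_of_length_one {H : SimpleGraph V} {p q : V} (W : H.Walk p q)
    (h : W.length = 1) : H.Adj p q ∧ W.edges = [s(p, q)] := by
  cases W with
  | nil => simp at h
  | cons h' W' =>
    cases W' with
    | nil => exact ⟨h', by simp⟩
    | cons h2 W2 => simp [SimpleGraph.Walk.length_cons] at h
 
lemma length_two_decomp {H : SimpleGraph V} {p q : V} (W : H.Walk p q)
    (h : W.length = 2) : ∃ m, H.Adj p m ∧ H.Adj m q ∧ W.edges = [s(p, m), s(m, q)] := by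
  cases W with
  | nil => simp at h
  | cons h' W' =>
    rw [SimpleGraph.Walk.length_cons] at h
    obtain ⟨hadj, hedges⟩ := adj_of_length_one W' (by omega)
    exact ⟨_, h', hadj, by rw [SimpleGraph.Walk.edges_cons, hedges]⟩

lemma chordal_deleteEdges_exposed {G : SimpleGraph V} (hch : IsChordal G)
    {x y : V} (hexp : IsExposedEdge G x y) :
    IsChordal (G.deleteEdges {s(x, y)}) := by
  classical
  set G' := G.deleteEdges {s(x, y)} with hG'
  have hGxy : G.Adj x y := hexp.1
  have hadjiff : ∀ a b : V, G'.Adj a b ↔ G.Adj a b ∧ s(a, b) ≠ s(x, y) := by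
    intro a b
    rw [hG', SimpleGraph.deleteEdges_adj, Set.mem_singleton_iff]
  have hG'le : G' ≤ G := by rw [hG']; exact SimpleGraph.deleteEdges_le _
  -- the key configuration analysis
  have KEY : ∀ (w1 : G'.Walk x x), w1.IsCycle → y ∈ w1.support → s(x, y) ∉ w1.edges →
      (∀ c d, c ∈ w1.support → d ∈ w1.support → G'.Adj c d → s(c, d) ∈ w1.edges) → False := by
    intro w1 hc1 hy1 hxyE1 hnochord1
    cases w1 with
    | nil => simp at hc1
    | cons h0 q =>
      obtain ⟨hqpath, hxu0e⟩ := (SimpleGraph.Walk.cons_isCycle_iff q h0).mp hc1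
      rename_i u0
      have hyx : y ≠ x := hGxy.ne'
      have hyq : y ∈ q.support := by
        rcases List.mem_cons.mp hy1 with h | h
        · exact absurd h hyx
        · exact h
      have hu0y : u0 ≠ y := by
        rintro rfl
        exact hxyE1 (by rw [SimpleGraph.Walk.edges_cons]; exact List.mem_cons_self)
      set T := q.takeUntil y hyq with hT
      set D := q.dropUntil y hyq with hD
      have hspec : T.append D = q := q.take_spec hyq
      have hqe : T.edges ++ D.edges = q.edges := by
        have := congrArg SimpleGraph.Walk.edges hspec
        rwa [SimpleGraph.Walk.edges_append] at this
      have hqs : T.support ++ D.support.tail = q.support := by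
        have := congrArg SimpleGraph.Walk.support hspec
        rwa [SimpleGraph.Walk.support_append] at this
      have hTpath : T.IsPath := hqpath.takeUntil hyq
      have hDpath : D.IsPath := hqpath.dropUntil hyq
      have hnodup : (T.support ++ D.support.tail).Nodup := by
        rw [hqs]; exact hqpath.support_nodup
      have hdisj := List.disjoint_of_nodup_append hnodup
      have hTD : ∀ z, z ∈ T.support → z ∈ D.support → z = y := by
        intro z h1 h2
        rw [D.support_eq_cons] at h2
        rcases List.mem_cons.mp h2 with h | h
        · exact h
        · exact absurd (hdisj h1 h) not_false
      have hxT : x ∉ T.support := fun hmem =>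
        hyx ((hTD x hmem D.end_mem_support).symm)
      have hTq : ∀ z ∈ T.support, z ∈ q.support := fun z hz => q.support_takeUntil_subset hyq hz
      have hDq : ∀ z ∈ D.support, z ∈ q.support := fun z hz => q.support_dropUntil_subset hyq hz
      have hw1e : (SimpleGraph.Walk.cons h0 q).edges = s(x, u0) :: (T.edges ++ D.edges) := by
        rw [SimpleGraph.Walk.edges_cons, hqe]
      have hTw1 : ∀ e ∈ T.edges, e ∈ (SimpleGraph.Walk.cons h0 q).edges := by
        intro e he
        rw [hw1e]
        exact List.mem_cons_of_mem _ (List.mem_append_left _ he)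
      have hDw1 : ∀ e ∈ D.edges, e ∈ (SimpleGraph.Walk.cons h0 q).edges := by
        intro e he
        rw [hw1e]
        exact List.mem_cons_of_mem _ (List.mem_append_right _ he)
      have hsupw1 : ∀ z ∈ q.support, z ∈ (SimpleGraph.Walk.cons h0 q).support := by
        intro z hz
        rw [SimpleGraph.Walk.support_cons]
        exact List.mem_cons_of_mem _ hz
      -- T has length exactly 1
      have hT1 : T.length = 1 := by
        have hTpos : T.length ≠ 0 := fun h =>
          hu0y (SimpleGraph.Walk.eq_of_length_eq_zero h)
        by_contra hne1
        have hT2 : 2 ≤ T.length := by omega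
        set P1 : G'.Walk x y := SimpleGraph.Walk.cons h0 T with hP1
        have hP1path : P1.IsPath := by
          rw [hP1, SimpleGraph.Walk.cons_isPath_iff]
          exact ⟨hTpath, hxT⟩
        have hP1e : P1.edges = s(x, u0) :: T.edges := rfl
        have hP1w1 : ∀ e ∈ P1.edges, e ∈ (SimpleGraph.Walk.cons h0 q).edges := by
          intro e he
          rcases List.mem_cons.mp he with rfl | he
          · rw [hw1e]; exact List.mem_cons_self
          · exact hTw1 e he
        have hP1G : ∀ e ∈ P1.edges, e ∈ G.edgeSet := fun e he =>
          SimpleGraph.edgeSet_mono hG'le (P1.edges_subset_edgeSet he)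
        set P1G := P1.transfer G hP1G with hP1Gdef
        set C1 : G.Walk x x := SimpleGraph.Walk.cons hGxy P1G.reverse with hC1
        have hC1cyc : C1.IsCycle := by
          rw [hC1, SimpleGraph.Walk.cons_isCycle_iff]
          constructor
          · exact (hP1path.transfer hP1G).reverse
          · rw [SimpleGraph.Walk.edges_reverse, List.mem_reverse,
              SimpleGraph.Walk.edges_transfer]
            exact fun hmem => hxyE1 (hP1w1 _ hmem)
        have hC1len : 4 ≤ C1.length := by
          rw [hC1, SimpleGraph.Walk.length_cons, SimpleGraph.Walk.length_reverse,
            SimpleGraph.Walk.length_transfer, hP1, SimpleGraph.Walk.length_cons]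
          omega
        obtain ⟨c, d, hc, hd, hadj, hne'⟩ := hch C1 hC1cyc hC1len
        have hcP1 : ∀ z, z ∈ C1.support → z ∈ P1.support := by
          intro z hz
          rw [hC1, SimpleGraph.Walk.support_cons] at hz
          rcases List.mem_cons.mp hz with rfl | hz
          · exact P1.start_mem_support
          · rw [SimpleGraph.Walk.support_reverse, List.mem_reverse,
              SimpleGraph.Walk.support_transfer] at hz
            exact hz
        have hcP := hcP1 c hc
        have hdP := hcP1 d hd
        have hsxy_ne : s(c, d) ≠ s(x, y) := by
          intro h
          refine hne' ?_
          rw [h, hC1, SimpleGraph.Walk.edges_cons]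
          exact List.mem_cons_self
        have hG'cd : G'.Adj c d := (hadjiff c d).mpr ⟨hadj, hsxy_ne⟩
        have hP1sup : ∀ z, z ∈ P1.support → z ∈ (SimpleGraph.Walk.cons h0 q).support := by
          intro z hz
          rw [hP1, SimpleGraph.Walk.support_cons] at hz
          rcases List.mem_cons.mp hz with rfl | hz
          · rw [SimpleGraph.Walk.support_cons]; exact List.mem_cons_self
          · exact hsupw1 z (hTq z hz)
        have hcdw1 : s(c, d) ∈ (SimpleGraph.Walk.cons h0 q).edges :=
          hnochord1 c d (hP1sup c hcP) (hP1sup d hdP) hG'cd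
        have hnotP1 : s(c, d) ∉ P1.edges := by
          intro hmem
          refine hne' ?_
          rw [hC1, SimpleGraph.Walk.edges_cons]
          refine List.mem_cons_of_mem _ ?_
          rw [SimpleGraph.Walk.edges_reverse, List.mem_reverse,
            SimpleGraph.Walk.edges_transfer]
          exact hmem
        have hcdD : s(c, d) ∈ D.edges := by
          rw [hw1e] at hcdw1
          rcases List.mem_cons.mp hcdw1 with h | h
          · exact absurd (by rw [hP1e, h]; exact List.mem_cons_self) hnotP1
          · rcases List.mem_append.mp h with h | h
            · exact absurd (by rw [hP1e]; exact List.mem_cons_of_mem _ h) hnotP1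
            · exact h
        have hcD : c ∈ D.support := D.fst_mem_support_of_mem_edges hcdD
        have hdD : d ∈ D.support := D.snd_mem_support_of_mem_edges hcdD
        have hcxy : c = x ∨ c = y := by
          rw [hP1, SimpleGraph.Walk.support_cons] at hcP
          rcases List.mem_cons.mp hcP with rfl | hcT
          · exact Or.inl rfl
          · exact Or.inr (hTD c hcT hcD)
        have hdxy : d = x ∨ d = y := by
          rw [hP1, SimpleGraph.Walk.support_cons] at hdP
          rcases List.mem_cons.mp hdP with rfl | hdT
          · exact Or.inl rfl
          · exact Or.inr (hTD d hdT hdD)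
        rcases hcxy with rfl | rfl <;> rcases hdxy with rfl | rfl
        · exact hadj.ne rfl
        · exact hsxy_ne rfl
        · exact hsxy_ne (Sym2.eq_swap)
        · exact hadj.ne rfl
      -- D has length exactly 2
      have hD2 : D.length = 2 := by
        have hDpos : 2 ≤ D.length := by
          refine two_le_length_of_not_adj D hyx ?_
          intro hadj
          exact ((hadjiff y x).mp hadj).2 (Sym2.eq_swap)
        by_contra hne2
        have hD3 : 3 ≤ D.length := by omega
        have hDG : ∀ e ∈ D.edges, e ∈ G.edgeSet := fun e he =>
          SimpleGraph.edgeSet_mono hG'le (D.edges_subset_edgeSet he)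
        set DG := D.transfer G hDG with hDGdef
        set C2 : G.Walk y y := SimpleGraph.Walk.cons hGxy.symm DG.reverse with hC2
        have hC2cyc : C2.IsCycle := by
          rw [hC2, SimpleGraph.Walk.cons_isCycle_iff]
          constructor
          · exact (hDpath.transfer hDG).reverse
          · rw [SimpleGraph.Walk.edges_reverse, List.mem_reverse,
              SimpleGraph.Walk.edges_transfer]
            intro hmem
            rw [Sym2.eq_swap] at hmem
            exact hxyE1 (hDw1 _ hmem)
        have hC2len : 4 ≤ C2.length := by
          rw [hC2, SimpleGraph.Walk.length_cons, SimpleGraph.Walk.length_reverse,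
            SimpleGraph.Walk.length_transfer]
          omega
        obtain ⟨c, d, hc, hd, hadj, hne'⟩ := hch C2 hC2cyc hC2len
        have hcD1 : ∀ z, z ∈ C2.support → z ∈ D.support := by
          intro z hz
          rw [hC2, SimpleGraph.Walk.support_cons] at hz
          rcases List.mem_cons.mp hz with rfl | hz
          · exact D.start_mem_support
          · rw [SimpleGraph.Walk.support_reverse, List.mem_reverse,
              SimpleGraph.Walk.support_transfer] at hz
            exact hz
        have hcD := hcD1 c hc
        have hdD := hcD1 d hd
        have hsxy_ne : s(c, d) ≠ s(x, y) := by
          intro h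
          refine hne' ?_
          rw [h, hC2, SimpleGraph.Walk.edges_cons, ← Sym2.eq_swap]
          exact List.mem_cons_self
        have hG'cd : G'.Adj c d := (hadjiff c d).mpr ⟨hadj, hsxy_ne⟩
        have hcdw1 : s(c, d) ∈ (SimpleGraph.Walk.cons h0 q).edges :=
          hnochord1 c d (hsupw1 c (hDq c hcD)) (hsupw1 d (hDq d hdD)) hG'cd
        have hnotD : s(c, d) ∉ D.edges := by
          intro hmem
          refine hne' ?_
          rw [hC2, SimpleGraph.Walk.edges_cons]
          refine List.mem_cons_of_mem _ ?_
          rw [SimpleGraph.Walk.edges_reverse, List.mem_reverse,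
            SimpleGraph.Walk.edges_transfer]
          exact hmem
        rw [hw1e] at hcdw1
        rcases List.mem_cons.mp hcdw1 with h | h
        · -- s(c,d) = s(x,u0) : then u0 ∈ D.support, but u0 starts T
          have hu0cd : u0 ∈ s(c, d) := by rw [h]; exact Sym2.mem_mk_right x u0
          have hu0D : u0 ∈ D.support := by
            rcases Sym2.mem_iff.mp hu0cd with rfl | rfl
            · exact hcD
            · exact hdD
          exact hu0y (hTD u0 T.start_mem_support hu0D)
        · rcases List.mem_append.mp h with h | h
          · have hcT : c ∈ T.support := T.fst_mem_support_of_mem_edges h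
            have hdT : d ∈ T.support := T.snd_mem_support_of_mem_edges h
            have hcy := hTD c hcT hcD
            have hdy := hTD d hdT hdD
            exact hadj.ne (hcy.trans hdy.symm)
          · exact hnotD h
      -- extract the two middle vertices
      obtain ⟨hadjT, hTe⟩ := adj_of_length_one T hT1
      obtain ⟨t, hadjyt, hadjtx, hDe⟩ := length_two_decomp D hD2
      have hux : u0 ≠ x := h0.ne'
      have hty : t ≠ y := hadjyt.ne'
      have htx : t ≠ x := hadjtx.ne
      have htD : t ∈ D.support :=
        D.snd_mem_support_of_mem_edges (by rw [hDe]; exact List.mem_cons_self)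
      have hut : u0 ≠ t := by
        rintro rfl
        exact hu0y (hTD u0 T.start_mem_support htD)
      -- u0 and t are not adjacent in G
      have hnadjut : ¬ G.Adj u0 t := by
        intro hadjut
        have hne_ut : s(u0, t) ≠ s(x, y) := by
          intro h
          rcases Sym2.eq_iff.mp h with ⟨h1, h2⟩ | ⟨h1, h2⟩
          · exact hux h1
          · exact hu0y h1
        have hG'ut : G'.Adj u0 t := (hadjiff u0 t).mpr ⟨hadjut, hne_ut⟩
        have hmem := hnochord1 u0 t (hsupw1 u0 (hTq u0 T.start_mem_support))
          (hsupw1 t (hDq t htD)) hG'ut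
        rw [hw1e, hTe, hDe] at hmem
        simp only [List.mem_cons, List.mem_append, List.mem_singleton,
          List.not_mem_nil, or_false, List.cons_append, List.nil_append] at hmem
        rcases hmem with h | h | h | h <;> rcases Sym2.eq_iff.mp h with ⟨h1, h2⟩ | ⟨h1, h2⟩
        · exact hux h1
        · exact htx h2
        · exact hty h2
        · exact hu0y h1
        · exact hu0y h1
        · exact hut h1
        · exact hut h1
        · exact hux h1
      -- both u0 and t lie in the unique maximal clique of xy
      obtain ⟨K, ⟨hKmax, hKx, hKy⟩, hKuniq⟩ := hexp.2.1
      have hadj_xu : G.Adj x u0 := (hadjiff x u0).mp h0 |>.1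
      have hadj_uy : G.Adj u0 y := (hadjiff u0 y).mp hadjT |>.1
      have hadj_yt : G.Adj y t := (hadjiff y t).mp hadjyt |>.1
      have hadj_tx : G.Adj t x := (hadjiff t x).mp hadjtx |>.1
      have hclique_u : G.IsClique {x, y, u0} := by
        intro a ha b hb hne
        simp only [Set.mem_insert_iff, Set.mem_singleton_iff] at ha hb
        rcases ha with rfl | rfl | rfl <;> rcases hb with rfl | rfl | rfl <;>
          first
          | exact absurd rfl hne
          | exact hGxy
          | exact hGxy.symm
          | exact hadj_xu
          | exact hadj_xu.symm
          | exact hadj_uy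
          | exact hadj_uy.symm
      have hclique_t : G.IsClique {x, y, t} := by
        intro a ha b hb hne
        simp only [Set.mem_insert_iff, Set.mem_singleton_iff] at ha hb
        rcases ha with rfl | rfl | rfl <;> rcases hb with rfl | rfl | rfl <;>
          first
          | exact absurd rfl hne
          | exact hGxy
          | exact hGxy.symm
          | exact hadj_tx.symm
          | exact hadj_tx
          | exact hadj_yt
          | exact hadj_yt.symm
      obtain ⟨K1, hK1max, hK1sub⟩ := exists_maxclique_superset G hclique_u
      obtain ⟨K2, hK2max, hK2sub⟩ := exists_maxclique_superset G hclique_t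
      have hK1 : K1 = K := hKuniq K1 ⟨hK1max, hK1sub (by simp), hK1sub (by simp)⟩
      have hK2 : K2 = K := hKuniq K2 ⟨hK2max, hK2sub (by simp), hK2sub (by simp)⟩
      have huK : u0 ∈ K := hK1 ▸ hK1sub (by simp)
      have htK : t ∈ K := hK2 ▸ hK2sub (by simp)
      exact hnadjut (hKmax.1 huK htK hut)
  -- main argument
  intro r w hc hlen
  by_contra hnochord
  push_neg at hnochord
  have hsubG : ∀ e ∈ w.edges, e ∈ G.edgeSet := fun e he =>
    SimpleGraph.edgeSet_mono hG'le (w.edges_subset_edgeSet he)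
  obtain ⟨a, b, ha, hb, hab, hne⟩ := hch (w.transfer G hsubG) (hc.transfer hsubG)
    (by rwa [SimpleGraph.Walk.length_transfer])
  rw [SimpleGraph.Walk.support_transfer] at ha hb
  rw [SimpleGraph.Walk.edges_transfer] at hne
  have heq : s(a, b) = s(x, y) := by
    by_contra hneq
    exact hne (hnochord a b ha hb ((hadjiff a b).mpr ⟨hab, hneq⟩))
  have hxys : x ∈ w.support ∧ y ∈ w.support := by
    rcases Sym2.eq_iff.mp heq with ⟨rfl, rfl⟩ | ⟨rfl, rfl⟩
    · exact ⟨ha, hb⟩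
    · exact ⟨hb, ha⟩
  have hxyE : s(x, y) ∉ w.edges := heq ▸ hne
  -- rotate the cycle to x
  have hrt : r ∈ w.support.tail := by
    cases w with
    | nil => simp at hc
    | cons h p => exact p.end_mem_support
  have hyt : y ∈ w.support.tail := by
    rcases List.mem_cons.mp (w.support_eq_cons ▸ hxys.2) with rfl | h
    · exact hrt
    · exact h
  have hw1cyc : (w.rotate x hxys.1).IsCycle := hc.rotate hxys.1
  have htailrot := w.support_rotate _ hxys.1
  have hy1 : y ∈ (w.rotate x hxys.1).support := by
    rw [SimpleGraph.Walk.support_eq_cons]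
    exact List.mem_cons_of_mem _ (htailrot.mem_iff.mpr hyt)
  have hedgerot : ∀ e, e ∈ (w.rotate x hxys.1).edges ↔ e ∈ w.edges :=
    fun e => (w.rotate_edges _ hxys.1).mem_iff
  have hsup1 : ∀ z, z ∈ (w.rotate x hxys.1).support → z ∈ w.support := by
    intro z hz
    rcases List.mem_cons.mp ((w.rotate x hxys.1).support_eq_cons ▸ hz) with rfl | hz
    · exact hxys.1
    · rw [w.support_eq_cons]
      exact List.mem_cons_of_mem _ (htailrot.mem_iff.mp hz)
  exact KEY (w.rotate x hxys.1) hw1cyc hy1 (fun hmem => hxyE ((hedgerot _).mp hmem))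
    (fun c d hcm hdm hadjcd => (hedgerot _).mpr
      (hnochord c d (hsup1 c hcm) (hsup1 d hdm) hadjcd))

/-- Every finite connected chordal graph can be reduced through a finite sequence of
erasures to a spanning tree. -/
theorem erasure_to_spanning_tree [Fintype V] (G : SimpleGraph V)
    (hconn : G.Connected) (hchord : IsChordal G) :
    ∃ T : SimpleGraph V, T.IsTree ∧ Relation.ReflTransGen Erasure G T := by
  classical
  suffices H : ∀ (n : ℕ) (G : SimpleGraph V), G.edgeSet.ncard ≤ n → G.Connected →
      IsChordal G → ∃ T : SimpleGraph V, T.IsTree ∧ Relation.ReflTransGen Erasure G T by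
    exact H G.edgeSet.ncard G le_rfl hconn hchord
  clear hconn hchord G
  intro n
  induction n with
  | zero =>
    intro G hcard hconn hch
    by_cases hac : G.IsAcyclic
    · exact ⟨G, ⟨hconn, hac⟩, Relation.ReflTransGen.refl⟩
    · exfalso
      unfold SimpleGraph.IsAcyclic at hac
      push_neg at hac
      obtain ⟨v, c, hc⟩ := hac
      obtain ⟨e, he⟩ : ∃ e, e ∈ c.edges := by
        cases c with
        | nil => simp at hc
        | cons h p =>
          exact ⟨_, by rw [SimpleGraph.Walk.edges_cons]; exact List.mem_cons_self⟩
      have h1 : 0 < G.edgeSet.ncard :=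
        Set.ncard_pos (Set.toFinite _) |>.mpr ⟨e, c.edges_subset_edgeSet he⟩
      omega
  | succ n ih =>
    intro G hcard hconn hch
    by_cases hac : G.IsAcyclic
    · exact ⟨G, ⟨hconn, hac⟩, Relation.ReflTransGen.refl⟩
    · unfold SimpleGraph.IsAcyclic at hac
      push_neg at hac
      obtain ⟨r, c, hc⟩ := hac
      obtain ⟨x, y, hexp⟩ := exists_exposed hch c hc
      have hcard' : (G.deleteEdges {s(x, y)}).edgeSet.ncard ≤ n := by
        have hss : (G.deleteEdges {s(x, y)}).edgeSet ⊂ G.edgeSet := by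
          refine ⟨SimpleGraph.edgeSet_mono (SimpleGraph.deleteEdges_le _), fun hback => ?_⟩
          have h1 : s(x, y) ∈ G.edgeSet := hexp.1
          have h2 := hback h1
          rw [SimpleGraph.mem_edgeSet, SimpleGraph.deleteEdges_adj] at h2
          exact h2.2 rfl
        have := Set.ncard_lt_ncard hss (Set.toFinite _)
        omega
      obtain ⟨T, hT, hrel⟩ := ih _ hcard' (connected_deleteEdges_exposed hconn hexp)
        (chordal_deleteEdges_exposed hch hexp)
      exact ⟨T, hT, Relation.ReflTransGen.head ⟨x, y, hexp, rfl⟩ hrel⟩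
end

section
/- Let G be a finite simple chordal graph. Then every exposed edge of G is contained in a cycle of G all of whose edges are exposed. -/
variable {V : Type*}

open SimpleGraph Walk

/-- simplicial vertex -/
def IsSimplicialV (G : SimpleGraph V) (s : V) : Prop :=
  ∀ ⦃a b : V⦄, G.Adj s a → G.Adj s b → a ≠ b → G.Adj a b

lemma IsExposedEdge.symm2 {G : SimpleGraph V} {x y : V} (h : IsExposedEdge G x y) :
    IsExposedEdge G y x := by
  obtain ⟨hadj, ⟨s, hs, huniq⟩, hfac⟩ := h
  refine ⟨hadj.symm, ⟨s, ⟨hs.1, hs.2.2, hs.2.1⟩, fun t ht => huniq t ⟨ht.1, ht.2.2, ht.2.1⟩⟩, ?_⟩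
  rintro ⟨_, h2⟩
  exact hfac ⟨hadj, by rwa [Set.pair_comm]⟩

lemma exists_maxClique [Fintype V] {G : SimpleGraph V} {c : Set V} (hc : G.IsClique c) :
    ∃ M : Set V, IsMaxClique G M ∧ c ⊆ M := by
  classical
  let P : Finset V → Prop := fun t => G.IsClique ↑t ∧ c ⊆ ↑t
  have hne : (Finset.univ.filter P).Nonempty := by
    refine ⟨c.toFinset, ?_⟩
    simp only [Finset.mem_filter, Finset.mem_univ, true_and, P, Set.coe_toFinset]
    exact ⟨hc, subset_rfl⟩
  obtain ⟨t₀, ht₀, hmax⟩ := (Finset.univ.filter P).exists_max_image Finset.card hne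
  simp only [Finset.mem_filter, Finset.mem_univ, true_and, P] at ht₀
  refine ⟨↑t₀, ⟨ht₀.1, ?_⟩, ht₀.2⟩
  intro t ht hsub
  have htfin : t.Finite := Set.toFinite t
  have htf : htfin.toFinset ∈ Finset.univ.filter P := by
    simp only [Finset.mem_filter, Finset.mem_univ, true_and, P, Set.Finite.coe_toFinset]
    exact ⟨ht, ht₀.2.trans hsub⟩
  have hcard := hmax _ htf
  have hsub' : t₀ ⊆ htfin.toFinset := by
    intro z hz
    simp only [Set.Finite.mem_toFinset]
    exact hsub hz
  have := Finset.eq_of_subset_of_card_le hsub' hcard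
  rw [← htfin.coe_toFinset, this]

lemma maxClique_unique_of_subset {G : SimpleGraph V} {P K : Set V}
    (hP : IsMaxClique G P) (hK : G.IsClique K) (h : P ⊆ K) : K = P :=
  hP.2 K hK h

def closedNbhd (G : SimpleGraph V) (s : V) : Set V := insert s {w | G.Adj s w}

lemma closedNbhd_clique {G : SimpleGraph V} {s : V} (hs : IsSimplicialV G s) :
    G.IsClique (closedNbhd G s) := by
  intro u hu v hv hne
  rcases Set.mem_insert_iff.mp hu with h1 | h1
  · rcases Set.mem_insert_iff.mp hv with h2 | h2
    · exact absurd (h1.trans h2.symm) hne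
    · exact h1 ▸ h2
  · rcases Set.mem_insert_iff.mp hv with h2 | h2
    · exact h2 ▸ (h1 : G.Adj s u).symm
    · exact hs h1 h2 hne

lemma closedNbhd_maxClique {G : SimpleGraph V} {s : V} (hs : IsSimplicialV G s) :
    (∀ t : Set V, G.IsClique t → s ∈ t → t ⊆ closedNbhd G s) ∧
      (G.IsClique (closedNbhd G s) ∧
        ∀ t : Set V, G.IsClique t → closedNbhd G s ⊆ t → t = closedNbhd G s) := by
  have hsub : ∀ t : Set V, G.IsClique t → s ∈ t → t ⊆ closedNbhd G s := by
    intro t ht hst w hw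
    by_cases hws : w = s
    · exact hws ▸ Set.mem_insert _ _
    · exact Set.mem_insert_of_mem _ (ht hst hw (Ne.symm hws))
  exact ⟨hsub, closedNbhd_clique hs, fun t ht hsubt =>
    Set.Subset.antisymm (hsub t ht (hsubt (Set.mem_insert _ _))) hsubt⟩

lemma exposed_of_simplicial_s11 {G : SimpleGraph V} {s a b : V} (hs : IsSimplicialV G s)
    (ha : G.Adj s a) (hb : G.Adj s b) (hab : a ≠ b) : IsExposedEdge G s a := by
  obtain ⟨hsub, hK⟩ := closedNbhd_maxClique hs
  have haK : a ∈ closedNbhd G s := Set.mem_insert_of_mem _ ha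
  have hbK : b ∈ closedNbhd G s := Set.mem_insert_of_mem _ hb
  refine ⟨ha, ⟨closedNbhd G s, ⟨hK, Set.mem_insert _ _, haK⟩, ?_⟩, ?_⟩
  · rintro t ⟨⟨ht, htmax⟩, hst, hat⟩
    exact (htmax _ hK.1 (hsub t ht hst)).symm
  · rintro ⟨-, hpc, hpmax⟩
    have := hpmax _ hK.1 (by
      intro w hw
      rcases hw with h1 | h1
      · exact h1 ▸ Set.mem_insert _ _
      · exact (Set.mem_singleton_iff.mp h1) ▸ haK)
    have hbmem : b ∈ ({s, a} : Set V) := this ▸ hbK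
    rcases hbmem with h1 | h1
    · exact hb.ne' h1
    · exact hab (Set.mem_singleton_iff.mp h1).symm

section Induce
variable {G : SimpleGraph V} {U : Set V}

lemma clique_image {c : Set U} (h : (G.induce U).IsClique c) :
    G.IsClique (Subtype.val '' c) := by
  rintro _ ⟨a, ha, rfl⟩ _ ⟨b, hb, rfl⟩ hne
  have hab : a ≠ b := fun he => hne (congrArg _ he)
  exact h ha hb hab

lemma clique_preimage {c : Set V} (h : G.IsClique c) :
    (G.induce U).IsClique (Subtype.val ⁻¹' c) := by
  intro a ha b hb hne
  exact h ha hb (Subtype.coe_injective.ne hne)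

lemma maxClique_preimage {M : Set V} (hM : IsMaxClique G M) (hMU : M ⊆ U) :
    IsMaxClique (G.induce U) (Subtype.val ⁻¹' M) := by
  refine ⟨clique_preimage hM.1, ?_⟩
  intro t ht hsub
  have himg : Subtype.val '' t = M := by
    apply hM.2 _ (clique_image ht)
    intro m hm
    exact ⟨⟨m, hMU hm⟩, hsub hm, rfl⟩
  ext a
  constructor
  · intro hat
    have : ↑a ∈ M := himg ▸ ⟨a, hat, rfl⟩
    exact this
  · intro haM
    have : (a : V) ∈ Subtype.val '' t := himg.symm ▸ haM
    obtain ⟨a', ha't, ha'⟩ := this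
    exact (Subtype.coe_injective ha') ▸ ha't

lemma IsChordal.induce (h : IsChordal G) (U : Set V) : IsChordal (G.induce U) := by
  intro v w hw hlen
  set f := SimpleGraph.Embedding.induce (G := G) U with hf
  have hinj : Function.Injective f := f.injective
  obtain ⟨a, b, ha, hb, hadj, hne⟩ := h (w.map f.toHom) (hw.map hinj)
    (by rwa [Walk.length_map])
  rw [Walk.support_map, List.mem_map] at ha hb
  obtain ⟨a', ha', rfl⟩ := ha
  obtain ⟨b', hb', rfl⟩ := hb
  refine ⟨a', b', ha', hb', hadj, fun hmem => hne ?_⟩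
  rw [Walk.edges_map, List.mem_map]
  exact ⟨s(a', b'), hmem, Sym2.map_pair_eq _ _ _⟩

end Induce

section Shortcut
variable [DecidableEq V] {G : SimpleGraph V}

lemma length_takeUntil_pos {u v x : V} (p : G.Walk u v) (hx : x ∈ p.support) (hne : u ≠ x) :
    0 < (p.takeUntil x hx).length := by
  by_contra hc
  push_neg at hc
  exact hne (Walk.eq_of_length_eq_zero (Nat.le_zero.mp hc))

lemma exists_shorter_walk {x y : V} (w : G.Walk x y) {c d : V} (hadj : G.Adj c d)
    (he : s(c, d) ∉ w.edges) (hc : c ∈ w.support) (hd : d ∈ w.support) :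
    ∃ w' : G.Walk x y, w'.length < w.length ∧ ∀ z ∈ w'.support, z ∈ w.support := by
  induction w with
  | nil =>
    simp only [Walk.support_nil, List.mem_singleton] at hc hd
    exact absurd (hc ▸ hd ▸ hadj) (G.irrefl)
  | @cons x m y h p ih =>
    rw [Walk.support_cons, List.mem_cons] at hc hd
    rw [Walk.edges_cons, List.mem_cons] at he
    push_neg at he
    by_cases hcp : c ∈ p.support <;> by_cases hdp : d ∈ p.support
    · obtain ⟨w', hlt, hsub⟩ := ih he.2 hcp hdp
      refine ⟨Walk.cons h w', ?_, ?_⟩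
      · simpa using Nat.succ_lt_succ hlt
      · intro z hz
        rw [Walk.support_cons, List.mem_cons] at hz ⊢
        exact hz.imp id (hsub z)
    · -- c ∈ p.support, d = x
      have hdx : d = x := (hd.resolve_right hdp)
      subst hdx
      have hmc : m ≠ c := by
        rintro rfl
        exact he.1 (Sym2.eq_swap)
      refine ⟨Walk.cons hadj.symm (p.dropUntil c hcp), ?_, ?_⟩
      · have hsplit := congrArg Walk.length (p.take_spec hcp)
        rw [Walk.length_append] at hsplit
        have := length_takeUntil_pos p hcp hmc
        simp only [Walk.length_cons]
        omega
      · intro z hz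
        rw [Walk.support_cons, List.mem_cons] at hz ⊢
        exact hz.imp id (fun h' => Walk.support_dropUntil_subset p hcp h')
    · -- d ∈ p.support, c = x
      have hcx : c = x := (hc.resolve_right hcp)
      subst hcx
      have hmd : m ≠ d := by
        rintro rfl
        exact he.1 rfl
      refine ⟨Walk.cons hadj (p.dropUntil d hdp), ?_, ?_⟩
      · have hsplit := congrArg Walk.length (p.take_spec hdp)
        rw [Walk.length_append] at hsplit
        have := length_takeUntil_pos p hdp hmd
        simp only [Walk.length_cons]
        omega
      · intro z hz
        rw [Walk.support_cons, List.mem_cons] at hz ⊢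
        exact hz.imp id (fun h' => Walk.support_dropUntil_subset p hdp h')
    · have hcx : c = x := (hc.resolve_right hcp)
      have hdx : d = x := (hd.resolve_right hdp)
      exact absurd (hcx ▸ hdx ▸ hadj) (G.irrefl)

end Shortcut

lemma two_le_length_of_not_adj_s11 {G : SimpleGraph V} {x y : V} (hne : x ≠ y) (hnadj : ¬ G.Adj x y)
    (w : G.Walk x y) : 2 ≤ w.length := by
  cases w with
  | nil => exact absurd rfl hne
  | cons h p =>
    cases p with
    | nil => exact absurd h hnadj
    | cons h' p' => simp only [Walk.length_cons]; omega

universe u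

lemma dirac_aux : ∀ (n : ℕ) (V : Type u) [Fintype V] (G : SimpleGraph V),
    IsChordal G → Fintype.card V ≤ n →
    (∀ a b : V, a ≠ b → G.Adj a b) ∨
      ∃ s t : V, s ≠ t ∧ ¬ G.Adj s t ∧ IsSimplicialV G s ∧ IsSimplicialV G t := by
  intro n
  induction n with
  | zero =>
    intro V _ G _ hcard
    left
    intro a b _
    have : IsEmpty V := Fintype.card_eq_zero_iff.mp (Nat.le_zero.mp hcard)
    exact (this.false a).elim
  | succ n ih =>
    intro V _ G hch hcard
    classical
    by_cases hcompl : ∀ a b : V, a ≠ b → G.Adj a b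
    · exact Or.inl hcompl
    right
    push_neg at hcompl
    obtain ⟨a, b, hab, hnadj⟩ := hcompl
    -- separators
    set Sep : Finset V → Prop := fun C =>
      a ∉ C ∧ b ∉ C ∧ ∀ w : G.Walk a b, ∃ z ∈ w.support, z ∈ C with hSepdef
    have hSep0 : Sep (Finset.univ \ {a, b}) := by
      refine ⟨by simp, by simp, ?_⟩
      intro w
      cases w with
      | nil => exact absurd rfl hab
      | @cons _ m _ h p =>
        have hma : m ≠ a := h.ne'
        have hmb : m ≠ b := by rintro rfl; exact hnadj h
        exact ⟨m, by simp [Walk.support_cons], by simp [hma, hmb]⟩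
    obtain ⟨C, hCmem, hCmin⟩ :=
      ((Finset.univ : Finset (Finset V)).filter Sep).exists_min_image Finset.card
        ⟨_, by simp only [Finset.mem_filter, Finset.mem_univ, true_and]; exact hSep0⟩
    rw [Finset.mem_filter] at hCmem
    replace hCmem : Sep C := hCmem.2
    obtain ⟨haC, hbC, hCsep⟩ := hCmem
    -- the two sides
    set A : Set V := {v | ∃ w : G.Walk a v, ∀ z ∈ w.support, z ∉ C} with hAdef
    set B : Set V := {v | ∃ w : G.Walk b v, ∀ z ∈ w.support, z ∉ C} with hBdef
    have haA : a ∈ A := ⟨Walk.nil, by simpa using haC⟩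
    have hbB : b ∈ B := ⟨Walk.nil, by simpa using hbC⟩
    have hA_notC : ∀ v ∈ A, v ∉ C := fun v ⟨w, hw⟩ => hw v (Walk.end_mem_support w)
    have hB_notC : ∀ v ∈ B, v ∉ C := fun v ⟨w, hw⟩ => hw v (Walk.end_mem_support w)
    have hA_adj : ∀ v ∈ A, ∀ u : V, G.Adj v u → u ∉ C → u ∈ A := by
      rintro v ⟨w, hw⟩ u hadj huC
      refine ⟨w.concat hadj, ?_⟩
      intro z hz
      rw [Walk.support_concat, List.mem_append] at hz
      rcases hz with hz | hz
      · exact hw z hz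
      · rw [List.mem_singleton] at hz; exact hz ▸ huC
    have hB_adj : ∀ v ∈ B, ∀ u : V, G.Adj v u → u ∉ C → u ∈ B := by
      rintro v ⟨w, hw⟩ u hadj huC
      refine ⟨w.concat hadj, ?_⟩
      intro z hz
      rw [Walk.support_concat, List.mem_append] at hz
      rcases hz with hz | hz
      · exact hw z hz
      · rw [List.mem_singleton] at hz; exact hz ▸ huC
    have hA_walk : ∀ (v : V) (w : G.Walk a v), (∀ z ∈ w.support, z ∉ C) →
        ∀ z ∈ w.support, z ∈ A := by
      intro v w hw z hz
      exact ⟨w.takeUntil z hz, fun u hu => hw u (Walk.support_takeUntil_subset w hz hu)⟩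
    have hB_walk : ∀ (v : V) (w : G.Walk b v), (∀ z ∈ w.support, z ∉ C) →
        ∀ z ∈ w.support, z ∈ B := by
      intro v w hw z hz
      exact ⟨w.takeUntil z hz, fun u hu => hw u (Walk.support_takeUntil_subset w hz hu)⟩
    have hAB : ∀ v : V, v ∈ A → v ∈ B → False := by
      rintro v ⟨wa, hwa⟩ ⟨wb, hwb⟩
      obtain ⟨z, hz, hzC⟩ := hCsep (wa.append wb.reverse)
      rw [Walk.mem_support_append_iff] at hz
      rcases hz with hz | hz
      · exact hwa z hz hzC
      · rw [Walk.support_reverse, List.mem_reverse] at hz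
        exact hwb z hz hzC
    -- every x ∈ C has neighbors in A and in B
    have hnbr : ∀ x ∈ C, (∃ p ∈ A, G.Adj x p) ∧ (∃ q ∈ B, G.Adj x q) := by
      intro x hxC
      have hnotSep : ¬ Sep (C.erase x) := by
        intro hS
        have hmem : C.erase x ∈ (Finset.univ : Finset (Finset V)).filter Sep := by
          simp only [Finset.mem_filter, Finset.mem_univ, true_and]; exact hS
        have := hCmin _ hmem
        have hlt := Finset.card_erase_lt_of_mem hxC
        omega
      simp only [hSepdef] at hnotSep
      push_neg at hnotSep
      obtain ⟨w0, hw0⟩ := hnotSep (fun h => haC (Finset.mem_of_mem_erase h))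
        (fun h => hbC (Finset.mem_of_mem_erase h))
      -- pass to a path
      have hw : ∀ z ∈ w0.bypass.support, z ∈ C → z = x := by
        intro z hz hzC
        by_contra hzx
        exact hw0 z (Walk.support_bypass_subset w0 hz) (Finset.mem_erase.mpr ⟨hzx, hzC⟩)
      set w : G.Walk a b := w0.bypass with hwdef
      have hwpath : w.IsPath := Walk.bypass_isPath w0
      obtain ⟨x', hx'supp, hx'C⟩ := hCsep w
      have hxw : x ∈ w.support := (hw x' hx'supp hx'C) ▸ hx'supp
      have hax : a ≠ x := fun h => haC (h ▸ hxC)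
      have hbx : b ≠ x := fun h => hbC (h ▸ hxC)
      set t : G.Walk a x := w.takeUntil x hxw with htdef
      set d : G.Walk x b := w.dropUntil x hxw with hddef
      have hsupp_split : w.support = t.support ++ d.support.tail := by
        conv_lhs => rw [← w.take_spec hxw]
        rw [Walk.support_append]
      have hnodup : (t.support ++ d.support.tail).Nodup := by
        rw [← hsupp_split]; exact hwpath.support_nodup
      have htnodup : t.support.Nodup := (List.nodup_append.mp hnodup).1
      have hdisj : ∀ z ∈ t.support, z ∈ d.support.tail → False := by
        intro z hz hz'
        exact (List.nodup_append'.mp hnodup).2.2 hz hz'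
      -- neighbor in A
      have hA_part : ∃ p ∈ A, G.Adj x p := by
        obtain ⟨p, hxp, t₂, ht₂⟩ := Walk.exists_eq_cons_of_ne (Ne.symm hax) t.reverse
        have hsupp : t.support.reverse = x :: t₂.support := by
          rw [← Walk.support_reverse, ht₂, Walk.support_cons]
        have hxnot : x ∉ t₂.support := by
          have : t.support.reverse.Nodup := List.nodup_reverse.mpr htnodup
          rw [hsupp] at this
          exact (List.nodup_cons.mp this).1
        have ht₂sub : ∀ z ∈ t₂.support, z ∈ t.support := by
          intro z hz
          rw [← List.mem_reverse, hsupp]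
          exact List.mem_cons_of_mem _ hz
        refine ⟨p, ⟨t₂.reverse, ?_⟩, hxp⟩
        intro z hz
        rw [Walk.support_reverse, List.mem_reverse] at hz
        have hzt := ht₂sub z hz
        have hzw : z ∈ w.support := Walk.support_takeUntil_subset w hxw hzt
        intro hzC
        have := hw z hzw hzC
        exact hxnot (this ▸ hz)
      -- neighbor in B
      have hB_part : ∃ q ∈ B, G.Adj x q := by
        obtain ⟨q, hxq, d₂, hd₂⟩ := Walk.exists_eq_cons_of_ne (Ne.symm hbx) d
        have hsupp : d.support = x :: d₂.support := by rw [hd₂, Walk.support_cons]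
        have hd₂tail : d₂.support = d.support.tail := by rw [hsupp, List.tail_cons]
        have hxnot : x ∉ d₂.support := by
          intro hmem
          apply hdisj x (by rw [htdef]; exact Walk.end_mem_support _)
          rw [← hd₂tail]; exact hmem
        refine ⟨q, ⟨d₂.reverse, ?_⟩, hxq⟩
        intro z hz
        rw [Walk.support_reverse, List.mem_reverse] at hz
        have hzw : z ∈ w.support := Walk.support_dropUntil_subset w hxw (by
          rw [hsupp]; exact List.mem_cons_of_mem _ hz)
        intro hzC
        have := hw z hzw hzC
        exact hxnot (this ▸ hz)
      exact ⟨hA_part, hB_part⟩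
    -- minimal walk extraction
    have minwalk : ∀ {x y : V} (P : G.Walk x y → Prop),
        (∀ (w : G.Walk x y) (w' : G.Walk x y), P w → (∀ z ∈ w'.support, z ∈ w.support) → P w') →
        ∀ w0 : G.Walk x y, P w0 →
        ∃ w : G.Walk x y, P w ∧ w.IsPath ∧ ∀ w' : G.Walk x y, P w' → w.length ≤ w'.length := by
      intro x y P hmono w0 hw0
      have hex : ∃ nn : ℕ, ∃ w : G.Walk x y, P w ∧ w.length = nn := ⟨w0.length, w0, hw0, rfl⟩
      obtain ⟨w₁, hw₁, hlen₁⟩ := Nat.find_spec hex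
      have hmin : ∀ w' : G.Walk x y, P w' → Nat.find hex ≤ w'.length := fun w' hw' =>
        Nat.find_min' hex ⟨w', hw', rfl⟩
      refine ⟨w₁.bypass, hmono w₁ w₁.bypass hw₁ (fun z hz => Walk.support_bypass_subset w₁ hz),
        Walk.bypass_isPath w₁, ?_⟩
      intro w' hw'
      calc w₁.bypass.length ≤ w₁.length := Walk.length_bypass_le _
        _ = Nat.find hex := hlen₁
        _ ≤ w'.length := hmin w' hw'
    -- C is a clique
    have hCclique : ∀ x ∈ C, ∀ y ∈ C, x ≠ y → G.Adj x y := by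
      intro x hxC y hyC hxy
      by_contra hnxy
      obtain ⟨⟨p₁, hp₁A, hxp₁⟩, ⟨q₁, hq₁B, hxq₁⟩⟩ := hnbr x hxC
      obtain ⟨⟨p₂, hp₂A, hyp₂⟩, ⟨q₂, hq₂B, hyq₂⟩⟩ := hnbr y hyC
      set PA : G.Walk x y → Prop := fun w => ∀ z ∈ w.support, z = x ∨ z = y ∨ z ∈ A with hPAdef
      set PB : G.Walk x y → Prop := fun w => ∀ z ∈ w.support, z = x ∨ z = y ∨ z ∈ B with hPBdef
      have hmonoA : ∀ (w w' : G.Walk x y), PA w → (∀ z ∈ w'.support, z ∈ w.support) → PA w' :=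
        fun w w' hw hsub z hz => hw z (hsub z hz)
      have hmonoB : ∀ (w w' : G.Walk x y), PB w → (∀ z ∈ w'.support, z ∈ w.support) → PB w' :=
        fun w w' hw hsub z hz => hw z (hsub z hz)
      obtain ⟨wp₁, hwp₁⟩ := hp₁A
      obtain ⟨wp₂, hwp₂⟩ := hp₂A
      obtain ⟨wq₁, hwq₁⟩ := hq₁B
      obtain ⟨wq₂, hwq₂⟩ := hq₂B
      have hP0A : PA (Walk.cons hxp₁ ((wp₁.reverse.append wp₂).concat hyp₂.symm)) := by
        intro z hz
        rw [Walk.support_cons, List.mem_cons] at hz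
        rcases hz with hz | hz
        · exact Or.inl hz
        · rw [Walk.support_concat, List.mem_append] at hz
          rcases hz with hz | hz
          · rw [Walk.mem_support_append_iff] at hz
            refine Or.inr (Or.inr ?_)
            rcases hz with hz | hz
            · rw [Walk.support_reverse, List.mem_reverse] at hz
              exact hA_walk _ wp₁ hwp₁ z hz
            · exact hA_walk _ wp₂ hwp₂ z hz
          · rw [List.mem_singleton] at hz
            exact Or.inr (Or.inl hz)
      have hP0B : PB (Walk.cons hxq₁ ((wq₁.reverse.append wq₂).concat hyq₂.symm)) := by
        intro z hz
        rw [Walk.support_cons, List.mem_cons] at hz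
        rcases hz with hz | hz
        · exact Or.inl hz
        · rw [Walk.support_concat, List.mem_append] at hz
          rcases hz with hz | hz
          · rw [Walk.mem_support_append_iff] at hz
            refine Or.inr (Or.inr ?_)
            rcases hz with hz | hz
            · rw [Walk.support_reverse, List.mem_reverse] at hz
              exact hB_walk _ wq₁ hwq₁ z hz
            · exact hB_walk _ wq₂ hwq₂ z hz
          · rw [List.mem_singleton] at hz
            exact Or.inr (Or.inl hz)
      obtain ⟨wA, hPA_wA, hwApath, hwAmin⟩ := minwalk PA hmonoA _ hP0A
      obtain ⟨wB, hPB_wB, hwBpath, hwBmin⟩ := minwalk PB hmonoB _ hP0B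
      have hlenA : 2 ≤ wA.length := two_le_length_of_not_adj_s11 hxy hnxy wA
      have hlenB : 2 ≤ wB.length := two_le_length_of_not_adj_s11 hxy hnxy wB
      obtain ⟨c, hxc, rA, hrA⟩ := Walk.exists_eq_cons_of_ne hxy wA
      have hcA : c ∈ A := by
        have hcsup : c ∈ wA.support := by
          rw [hrA, Walk.support_cons]
          exact List.mem_cons_of_mem _ (Walk.start_mem_support rA)
        rcases hPA_wA c hcsup with h1 | h1 | h1
        · exact absurd (h1 ▸ hxc) (G.irrefl)
        · exact absurd (h1 ▸ hxc) hnxy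
        · exact h1
      have hwA' : rA.IsPath ∧ x ∉ rA.support := by
        have := hwApath
        rw [hrA, Walk.cons_isPath_iff] at this
        exact this
      have hrevnd : wB.reverse.support.Nodup := (hwBpath.reverse).support_nodup
      have hytail : y ∉ wB.reverse.support.tail := by
        have h0 := Walk.support_eq_cons wB.reverse
        rw [h0] at hrevnd
        exact (List.nodup_cons.mp hrevnd).1
      have htailsub : ∀ z ∈ wB.reverse.support.tail, z ∈ wB.support := by
        intro z hz
        have : z ∈ wB.reverse.support := by
          rw [Walk.support_eq_cons wB.reverse]
          exact List.mem_cons_of_mem _ hz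
        rw [Walk.support_reverse, List.mem_reverse] at this
        exact this
      have happpath : (rA.append wB.reverse).IsPath := by
        rw [Walk.isPath_def, Walk.support_append]
        refine List.Nodup.append hwA'.1.support_nodup
          ((Walk.support_eq_cons wB.reverse ▸ hrevnd).of_cons) ?_
        intro z hz hz'
        have hzwA : z ∈ wA.support := by
          rw [hrA, Walk.support_cons]
          exact List.mem_cons_of_mem _ hz
        have hz1 := hPA_wA z hzwA
        have hzx : z ≠ x := fun h => hwA'.2 (h ▸ hz)
        have hzy : z ≠ y := fun h => hytail (h ▸ hz')
        have hz2 := hPB_wB z (htailsub z hz')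
        rcases hz1 with h1 | h1 | h1
        · exact hzx h1
        · exact hzy h1
        · rcases hz2 with h2 | h2 | h2
          · exact hzx h2
          · exact hzy h2
          · exact hAB z h1 h2
      have hxcedge : s(x, c) ∉ (rA.append wB.reverse).edges := by
        rw [Walk.edges_append, List.mem_append]
        rintro (h1 | h1)
        · exact hwA'.2 (Walk.fst_mem_support_of_mem_edges rA h1)
        · rw [Walk.edges_reverse, List.mem_reverse] at h1
          have hcsup : c ∈ wB.support := Walk.snd_mem_support_of_mem_edges wB h1
          rcases hPB_wB c hcsup with h2 | h2 | h2
          · exact absurd (h2 ▸ hxc) (G.irrefl)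
          · exact absurd (h2 ▸ hxc) hnxy
          · exact hAB c hcA h2
      set cyc : G.Walk x x := Walk.cons hxc (rA.append wB.reverse) with hcycdef
      have hcyc : cyc.IsCycle := (Walk.cons_isCycle_iff _ hxc).mpr ⟨happpath, hxcedge⟩
      have hcyclen : 4 ≤ cyc.length := by
        have h1 : wA.length = rA.length + 1 := by rw [hrA, Walk.length_cons]
        have h2 : cyc.length = rA.length + wB.length + 1 := by
          rw [hcycdef, Walk.length_cons, Walk.length_append, Walk.length_reverse]
        omega
      obtain ⟨e₁, e₂, he₁, he₂, headj, hene⟩ := hch cyc hcyc hcyclen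
      have hedgesA : ∀ e, e ∈ wA.edges → e ∈ cyc.edges := by
        intro e he
        rw [hrA, Walk.edges_cons, List.mem_cons] at he
        rw [hcycdef, Walk.edges_cons, List.mem_cons, Walk.edges_append, List.mem_append]
        exact he.imp id (fun h => Or.inl h)
      have hedgesB : ∀ e, e ∈ wB.edges → e ∈ cyc.edges := by
        intro e he
        rw [hcycdef, Walk.edges_cons, List.mem_cons, Walk.edges_append, List.mem_append]
        refine Or.inr (Or.inr ?_)
        rw [Walk.edges_reverse, List.mem_reverse]
        exact he
      have hsupclass : ∀ z ∈ cyc.support, z ∈ wA.support ∨ z ∈ wB.support := by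
        intro z hz
        rw [hcycdef, Walk.support_cons, List.mem_cons] at hz
        rcases hz with hz | hz
        · exact Or.inl (hz ▸ Walk.start_mem_support wA)
        · rw [Walk.mem_support_append_iff] at hz
          rcases hz with hz | hz
          · refine Or.inl ?_
            rw [hrA, Walk.support_cons]
            exact List.mem_cons_of_mem _ hz
          · rw [Walk.support_reverse, List.mem_reverse] at hz
            exact Or.inr hz
      have hbothA : e₁ ∈ wA.support → e₂ ∈ wA.support → False := by
        intro h1 h2
        have hne' : s(e₁, e₂) ∉ wA.edges := fun hh => hene (hedgesA _ hh)
        obtain ⟨w', hlt, hsub⟩ := exists_shorter_walk wA headj hne' h1 h2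
        have hPw' : PA w' := hmonoA wA w' hPA_wA hsub
        have := hwAmin w' hPw'
        omega
      have hbothB : e₁ ∈ wB.support → e₂ ∈ wB.support → False := by
        intro h1 h2
        have hne' : s(e₁, e₂) ∉ wB.edges := fun hh => hene (hedgesB _ hh)
        obtain ⟨w', hlt, hsub⟩ := exists_shorter_walk wB headj hne' h1 h2
        have hPw' : PB w' := hmonoB wB w' hPB_wB hsub
        have := hwBmin w' hPw'
        omega
      have hcross : ∀ u₁ u₂ : V, G.Adj u₁ u₂ → u₁ ∈ wA.support → u₂ ∈ wB.support →
          (u₁ ∈ wB.support → False) → (u₂ ∈ wA.support → False) → False := by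
        intro u₁ u₂ hadj12 h1 h2 hnb hna
        have hu₁ : u₁ ∈ A := by
          rcases hPA_wA u₁ h1 with h | h | h
          · exact absurd (h ▸ Walk.start_mem_support wB) hnb
          · exact absurd (h ▸ Walk.end_mem_support wB) hnb
          · exact h
        have hu₂ : u₂ ∈ B := by
          rcases hPB_wB u₂ h2 with h | h | h
          · exact absurd (h ▸ Walk.start_mem_support wA) hna
          · exact absurd (h ▸ Walk.end_mem_support wA) hna
          · exact h
        exact hAB u₂ (hA_adj u₁ hu₁ u₂ hadj12 (hB_notC u₂ hu₂)) hu₂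
      rcases hsupclass e₁ he₁ with h1 | h1 <;> rcases hsupclass e₂ he₂ with h2 | h2
      · exact hbothA h1 h2
      · by_cases hb1 : e₁ ∈ wB.support
        · exact hbothB hb1 h2
        · by_cases ha2 : e₂ ∈ wA.support
          · exact hbothA h1 ha2
          · exact hcross e₁ e₂ headj h1 h2 hb1 ha2
      · by_cases hb2 : e₂ ∈ wB.support
        · exact hbothB h1 hb2
        · by_cases ha1 : e₁ ∈ wA.support
          · exact hbothA ha1 h2
          · exact hcross e₂ e₁ headj.symm h2 h1 hb2 ha1
      · exact hbothB h1 h2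
    -- from a side, produce a simplicial vertex
    have side : ∀ (r : V) (R : Set V), r ∈ R → (∀ v ∈ R, v ∉ C) →
        (∀ v ∈ R, ∀ u : V, G.Adj v u → u ∉ C → u ∈ R) →
        (∃ z0 : V, z0 ∉ R ∧ z0 ∉ C) → ∃ s0 ∈ R, IsSimplicialV G s0 := by
      rintro r R hrR hRC hRadj ⟨z0, hz0R, hz0C⟩
      set U : Set V := R ∪ (↑C : Set V) with hUdef
      haveI : Fintype ↥U := U.toFinite.fintype
      have hz0U : z0 ∉ U := by
        rintro (h | h)
        · exact hz0R h
        · exact hz0C (by simpa using h)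
      have hcard' : Fintype.card ↥U ≤ n := by
        have hlt : Fintype.card ↥U < Fintype.card V :=
          Fintype.card_lt_of_injective_of_notMem Subtype.val Subtype.coe_injective
            (b := z0) (by rintro ⟨⟨u, hu⟩, rfl⟩; exact hz0U hu)
        omega
      have hchU : IsChordal (G.induce U) := hch.induce U
      have hNR : ∀ v ∈ R, ∀ u : V, G.Adj v u → u ∈ U := by
        intro v hv u hadj
        by_cases huC : u ∈ C
        · exact Or.inr (by simpa using huC)
        · exact Or.inl (hRadj v hv u hadj huC)
      have lift_simp : ∀ σ : ↥U, ↑σ ∈ R → IsSimplicialV (G.induce U) σ → IsSimplicialV G ↑σ := by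
        intro σ hσR hs u w hadju hadjw hneuw
        have huU : u ∈ U := hNR _ hσR u hadju
        have hwU : w ∈ U := hNR _ hσR w hadjw
        exact hs (a := ⟨u, huU⟩) (b := ⟨w, hwU⟩) hadju hadjw
          (fun h => hneuw (congrArg Subtype.val h))
      rcases ih ↥U (G.induce U) hchU hcard' with hcompl' | ⟨s₁, s₂, hne12, hnadj12, hs₁, hs₂⟩
      · refine ⟨r, hrR, ?_⟩
        intro u w hadju hadjw hneuw
        have huU : u ∈ U := hNR r hrR u hadju
        have hwU : w ∈ U := hNR r hrR w hadjw
        exact hcompl' ⟨u, huU⟩ ⟨w, hwU⟩ (fun h => hneuw (congrArg Subtype.val h))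
      · have hval : (s₁ : V) ≠ (s₂ : V) := fun h => hne12 (Subtype.coe_injective h)
        have hpick : ((s₁ : V) ∈ R ∧ IsSimplicialV (G.induce U) s₁) ∨
            ((s₂ : V) ∈ R ∧ IsSimplicialV (G.induce U) s₂) := by
          by_cases h1 : (s₁ : V) ∈ R
          · exact Or.inl ⟨h1, hs₁⟩
          · have h1C : (s₁ : V) ∈ C := by
              rcases s₁.2 with h | h
              · exact absurd h h1
              · simpa using h
            have h2 : (s₂ : V) ∈ R := by
              rcases s₂.2 with h | h
              · exact h
              · exact absurd (hCclique _ h1C _ (by simpa using h) hval) hnadj12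
            exact Or.inr ⟨h2, hs₂⟩
        rcases hpick with ⟨hmem, hsimp⟩ | ⟨hmem, hsimp⟩
        · exact ⟨s₁, hmem, lift_simp s₁ hmem hsimp⟩
        · exact ⟨s₂, hmem, lift_simp s₂ hmem hsimp⟩
    obtain ⟨sA, hsAA, hsimpA⟩ := side a A haA hA_notC hA_adj ⟨b, fun h => hAB b h hbB, hbC⟩
    obtain ⟨sB, hsBB, hsimpB⟩ := side b B hbB hB_notC hB_adj ⟨a, fun h => hAB a haA h, haC⟩
    refine ⟨sA, sB, ?_, ?_, hsimpA, hsimpB⟩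
    · rintro rfl
      exact hAB sA hsAA hsBB
    · intro hadj
      exact hAB sB (hA_adj sA hsAA sB hadj (hB_notC sB hsBB)) hsBB

lemma exposed_third [Fintype V] {G : SimpleGraph V} {x y : V} (h : IsExposedEdge G x y) :
    ∃ S : Set V, IsMaxClique G S ∧ x ∈ S ∧ y ∈ S ∧
      (∀ t : Set V, IsMaxClique G t → x ∈ t → y ∈ t → t = S) ∧
      ∃ z ∈ S, z ≠ x ∧ z ≠ y := by
  obtain ⟨hadj, ⟨S, ⟨hSmax, hxS, hyS⟩, huniq⟩, hnf⟩ := h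
  have hpair : G.IsClique {x, y} := SimpleGraph.isClique_pair.mpr (fun _ => hadj)
  have hnm : ¬ IsMaxClique G {x, y} := fun hm => hnf ⟨hadj, hm⟩
  obtain ⟨t, ht, hsub, hne⟩ : ∃ t : Set V, G.IsClique t ∧ {x, y} ⊆ t ∧ t ≠ {x, y} := by
    by_contra hc
    push_neg at hc
    exact hnm ⟨hpair, fun t ht hsub => hc t ht hsub⟩
  obtain ⟨M₀, hM₀, htM₀⟩ := exists_maxClique ht
  have hM₀S : M₀ = S := huniq M₀ ⟨hM₀, htM₀ (hsub (by simp)), htM₀ (hsub (by simp))⟩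
  obtain ⟨z, hzt, hz⟩ := Set.exists_of_ssubset (ssubset_of_subset_of_ne hsub (Ne.symm hne))
  simp only [Set.mem_insert_iff, Set.mem_singleton_iff, not_or] at hz
  exact ⟨S, hSmax, hxS, hyS, fun t h1 h2 h3 => huniq t ⟨h1, h2, h3⟩,
    z, hM₀S ▸ htM₀ hzt, hz.1, hz.2⟩

lemma exposed_of_induce [Fintype V] {G : SimpleGraph V} {s : V} {U : Set V}
    (hU : ∀ w : V, w ∈ U ↔ w ≠ s)
    {a b : ↥U} (h : IsExposedEdge (G.induce U) a b)
    (hnab : ¬(G.Adj s ↑a ∧ G.Adj s ↑b)) : IsExposedEdge G ↑a ↑b := by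
  classical
  haveI : Fintype ↥U := U.toFinite.fintype
  obtain ⟨T', hT'max, haT', hbT', hT'uniq, z, hzT', hza, hzb⟩ := exposed_third h
  have hadj : G.Adj ↑a ↑b := h.1
  have key : ∀ t : Set V, G.IsClique t → ↑a ∈ t → ↑b ∈ t → t ⊆ U := by
    intro t ht hat hbt w hw
    rw [hU]
    rintro rfl
    have hsa : w ≠ ↑a := fun hh => ((hU ↑a).mp a.2) hh.symm
    have hsb : w ≠ ↑b := fun hh => ((hU ↑b).mp b.2) hh.symm
    exact hnab ⟨ht hw hat hsa, ht hw hbt hsb⟩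
  set T : Set V := Subtype.val '' T' with hTdef
  have hTclique : G.IsClique T := clique_image hT'max.1
  have haT : ↑a ∈ T := ⟨a, haT', rfl⟩
  have hbT : ↑b ∈ T := ⟨b, hbT', rfl⟩
  have himg_eq : ∀ t : Set V, t ⊆ U →
      Subtype.val '' ((Subtype.val : ↥U → V) ⁻¹' t) = t := by
    intro t htU
    rw [Subtype.image_preimage_coe]
    exact Set.inter_eq_self_of_subset_right htU
  have hTmax : IsMaxClique G T := by
    refine ⟨hTclique, ?_⟩
    intro t ht hsub
    have htU : t ⊆ U := key t ht (hsub haT) (hsub hbT)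
    have hpre : (G.induce U).IsClique (Subtype.val ⁻¹' t) := clique_preimage ht
    have hsubpre : T' ⊆ Subtype.val ⁻¹' t := fun w hw => hsub ⟨w, hw, rfl⟩
    have heq := hT'max.2 _ hpre hsubpre
    rw [← himg_eq t htU, heq]
  refine ⟨hadj, ⟨T, ⟨hTmax, haT, hbT⟩, ?_⟩, ?_⟩
  · rintro P ⟨hPmax, haP, hbP⟩
    have hPU : P ⊆ U := key P hPmax.1 haP hbP
    have hpre := maxClique_preimage hPmax hPU
    have heq : Subtype.val ⁻¹' P = T' := hT'uniq _ hpre haP hbP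
    rw [← himg_eq P hPU, heq]
  · rintro ⟨-, hpm⟩
    have hTpair : T = {↑a, ↑b} := hpm.2 T hTclique (by
      rw [Set.insert_subset_iff, Set.singleton_subset_iff]
      exact ⟨haT, hbT⟩)
    have hzmem : (↑z : V) ∈ T := ⟨z, hzT', rfl⟩
    rw [hTpair] at hzmem
    rcases hzmem with h1 | h1
    · exact hza (Subtype.coe_injective h1)
    · exact hzb (Subtype.coe_injective (Set.mem_singleton_iff.mp h1))

lemma main_aux : ∀ (n : ℕ) (V : Type u) [Fintype V] (G : SimpleGraph V),
    IsChordal G → Fintype.card V ≤ n →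
    ∀ (M : Set V) (u v f : V), IsMaxClique G M → u ∈ M → v ∈ M → f ∈ M →
      u ≠ v → u ≠ f → v ≠ f →
      ∃ w : G.Walk u v, (∀ a b : V, s(a, b) ∈ w.edges → IsExposedEdge G a b) ∧
        f ∉ w.support := by
  intro n
  induction n with
  | zero =>
    intro V _ G _ hcard M u v f _ _ _ _ _ _ _
    have : IsEmpty V := Fintype.card_eq_zero_iff.mp (Nat.le_zero.mp hcard)
    exact (this.false u).elim
  | succ n ih =>
    intro V _ G hch hcard M u v f hM huM hvM hfM huv huf hvf
    classical
    have hadj : G.Adj u v := hM.1 huM hvM huv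
    by_cases hexp : IsExposedEdge G u v
    · refine ⟨Walk.cons hadj Walk.nil, ?_, ?_⟩
      · intro a b hab
        rw [Walk.edges_cons, Walk.edges_nil, List.mem_singleton] at hab
        rcases Sym2.eq_iff.mp hab with ⟨rfl, rfl⟩ | ⟨rfl, rfl⟩
        · exact hexp
        · exact hexp.symm2
      · intro hf
        rw [Walk.support_cons, Walk.support_nil, List.mem_cons, List.mem_singleton] at hf
        rcases hf with hf | hf
        · exact huf hf.symm
        · exact hvf hf.symm
    · have hncompl : ¬ ∀ a b : V, a ≠ b → G.Adj a b := by
        intro hcompl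
        apply hexp
        have hUc : G.IsClique (Set.univ : Set V) := fun p _ q _ hne => hcompl p q hne
        have hUmax : IsMaxClique G Set.univ :=
          ⟨hUc, fun t _ hsub => Set.eq_univ_of_univ_subset hsub⟩
        refine ⟨hadj, ⟨Set.univ, ⟨hUmax, trivial, trivial⟩, ?_⟩, ?_⟩
        · rintro t ⟨htmax, -, -⟩
          exact (htmax.2 _ hUc (Set.subset_univ _)).symm
        · rintro ⟨-, hpm⟩
          have huniv : Set.univ = ({u, v} : Set V) := hpm.2 _ hUc (Set.subset_univ _)
          have hf : f ∈ ({u, v} : Set V) := huniv ▸ Set.mem_univ f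
          rcases hf with hf | hf
          · exact huf hf.symm
          · exact hvf (Set.mem_singleton_iff.mp hf).symm
      rcases dirac_aux (n + 1) V G hch hcard with hcompl | ⟨s₁, s₂, hne12, hnadj12, hs₁, hs₂⟩
      · exact absurd hcompl hncompl
      have hsM : s₁ ∉ M ∨ s₂ ∉ M := by
        by_contra hb
        push_neg at hb
        exact hnadj12 (hM.1 hb.1 hb.2 hne12)
      obtain ⟨s, hsimp, hsMn⟩ : ∃ s : V, IsSimplicialV G s ∧ s ∉ M := by
        rcases hsM with h | h
        exacts [⟨s₁, hs₁, h⟩, ⟨s₂, hs₂, h⟩]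
      set U : Set V := {s}ᶜ with hUdef
      have hU : ∀ w : V, w ∈ U ↔ w ≠ s := fun w => by simp [hUdef]
      haveI : Fintype ↥U := U.toFinite.fintype
      have hMU : M ⊆ U := fun m hm => (hU m).mpr (fun h => hsMn (h ▸ hm))
      have hcard' : Fintype.card ↥U ≤ n := by
        have : Fintype.card ↥U < Fintype.card V :=
          Fintype.card_lt_of_injective_of_notMem Subtype.val Subtype.coe_injective
            (b := s) (by rintro ⟨w', hww⟩; exact ((hU ↑w').mp w'.2) hww)
        omega
      have hchU : IsChordal (G.induce U) := hch.induce U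
      have hM' : IsMaxClique (G.induce U) (Subtype.val ⁻¹' M) := maxClique_preimage hM hMU
      obtain ⟨W', hW'exp, hW'f⟩ := ih ↥U (G.induce U) hchU hcard' (Subtype.val ⁻¹' M)
        ⟨u, hMU huM⟩ ⟨v, hMU hvM⟩ ⟨f, hMU hfM⟩ hM' huM hvM hfM
        (fun hh => huv (congrArg Subtype.val hh)) (fun hh => huf (congrArg Subtype.val hh))
        (fun hh => hvf (congrArg Subtype.val hh))
      have transfer : ∀ (p q : ↥U) (W₀ : (G.induce U).Walk p q),
          (∀ a b : ↥U, s(a, b) ∈ W₀.edges → IsExposedEdge (G.induce U) a b) →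
          ∃ W : G.Walk ↑p ↑q, (∀ a b : V, s(a, b) ∈ W.edges → IsExposedEdge G a b) ∧
            ∀ z ∈ W.support, z = s ∨ ∃ z' ∈ W₀.support, (↑z' : V) = z := by
        intro p q W₀
        induction W₀ with
        | nil =>
          intro _
          refine ⟨Walk.nil, ?_, ?_⟩
          · intro a b hab
            rw [Walk.edges_nil] at hab
            exact absurd hab List.not_mem_nil
          · intro z hz
            rw [Walk.support_nil, List.mem_singleton] at hz
            exact Or.inr ⟨_, by rw [Walk.support_nil]; exact List.mem_singleton_self _, hz.symm⟩
        | @cons p₁ m₁ q₁ hpm rest ih' =>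
          intro hexp'
          obtain ⟨Wr, hWr, hWrsupp⟩ := ih' (fun a b hab => hexp' a b
            (by rw [Walk.edges_cons]; exact List.mem_cons_of_mem _ hab))
          have hedge : IsExposedEdge (G.induce U) p₁ m₁ := hexp' p₁ m₁
            (by rw [Walk.edges_cons]; exact List.mem_cons_self)
          have hGpm : G.Adj ↑p₁ ↑m₁ := hedge.1
          by_cases hsa : G.Adj s ↑p₁ ∧ G.Adj s ↑m₁
          · have hexp1 : IsExposedEdge G s ↑p₁ :=
              exposed_of_simplicial_s11 hsimp hsa.1 hsa.2 hGpm.ne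
            have hexp2 : IsExposedEdge G s ↑m₁ :=
              exposed_of_simplicial_s11 hsimp hsa.2 hsa.1 hGpm.ne'
            refine ⟨Walk.cons hsa.1.symm (Walk.cons hsa.2 Wr), ?_, ?_⟩
            · intro α β hab
              rw [Walk.edges_cons, List.mem_cons] at hab
              rcases hab with hab | hab
              · rcases Sym2.eq_iff.mp hab with ⟨rfl, rfl⟩ | ⟨rfl, rfl⟩
                · exact hexp1.symm2
                · exact hexp1
              · rw [Walk.edges_cons, List.mem_cons] at hab
                rcases hab with hab | hab
                · rcases Sym2.eq_iff.mp hab with ⟨rfl, rfl⟩ | ⟨rfl, rfl⟩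
                  · exact hexp2
                  · exact hexp2.symm2
                · exact hWr α β hab
            · intro z hz
              rw [Walk.support_cons, List.mem_cons] at hz
              rcases hz with rfl | hz
              · exact Or.inr ⟨p₁, by rw [Walk.support_cons]; exact List.mem_cons_self, rfl⟩
              rw [Walk.support_cons, List.mem_cons] at hz
              rcases hz with rfl | hz
              · exact Or.inl rfl
              · rcases hWrsupp z hz with h | ⟨z', hz', hzz⟩
                · exact Or.inl h
                · exact Or.inr ⟨z',
                    by rw [Walk.support_cons]; exact List.mem_cons_of_mem _ hz', hzz⟩
          · have hexp0 : IsExposedEdge G ↑p₁ ↑m₁ := exposed_of_induce hU hedge hsa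
            refine ⟨Walk.cons hGpm Wr, ?_, ?_⟩
            · intro α β hab
              rw [Walk.edges_cons, List.mem_cons] at hab
              rcases hab with hab | hab
              · rcases Sym2.eq_iff.mp hab with ⟨rfl, rfl⟩ | ⟨rfl, rfl⟩
                · exact hexp0
                · exact hexp0.symm2
              · exact hWr α β hab
            · intro z hz
              rw [Walk.support_cons, List.mem_cons] at hz
              rcases hz with rfl | hz
              · exact Or.inr ⟨p₁, by rw [Walk.support_cons]; exact List.mem_cons_self, rfl⟩
              · rcases hWrsupp z hz with h | ⟨z', hz', hzz⟩
                · exact Or.inl h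
                · exact Or.inr ⟨z',
                    by rw [Walk.support_cons]; exact List.mem_cons_of_mem _ hz', hzz⟩
      obtain ⟨W, hWexp, hWsupp⟩ := transfer _ _ W' hW'exp
      refine ⟨W, hWexp, ?_⟩
      intro hf
      rcases hWsupp f hf with h | ⟨z', hz', hzz⟩
      · exact hsMn (h ▸ hfM)
      · have hzf : z' = (⟨f, hMU hfM⟩ : ↥U) := Subtype.coe_injective hzz
        exact hW'f (hzf ▸ hz')

/-- In a finite chordal graph, every exposed edge lies on a cycle all of whose edges
are exposed. -/
theorem exposed_edge_mem_exposed_cycle [Fintype V] (G : SimpleGraph V)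
    (hchord : IsChordal G) (x y : V) (h : IsExposedEdge G x y) :
    ∃ (v : V) (w : G.Walk v v), w.IsCycle ∧ s(x, y) ∈ w.edges ∧
      ∀ a b : V, s(a, b) ∈ w.edges → IsExposedEdge G a b := by
  classical
  have hadj : G.Adj x y := h.1
  obtain ⟨S, hSmax, hxS, hyS, -, z, hzS, hzx, hzy⟩ := exposed_third h
  obtain ⟨W₁, hW₁, hW₁x⟩ := main_aux (Fintype.card V) V G hchord le_rfl S y z x
    hSmax hyS hzS hxS (Ne.symm hzy) hadj.ne' hzx
  obtain ⟨W₂, hW₂, hW₂y⟩ := main_aux (Fintype.card V) V G hchord le_rfl S z x y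
    hSmax hzS hxS hyS hzx hzy hadj.ne
  set Wf : G.Walk y x := W₁.append W₂ with hWf
  have hxyW : s(x, y) ∉ Wf.edges := by
    rw [hWf, Walk.edges_append, List.mem_append]
    rintro (h1 | h1)
    · exact hW₁x (Walk.fst_mem_support_of_mem_edges W₁ h1)
    · exact hW₂y (Walk.snd_mem_support_of_mem_edges W₂ h1)
  have hpexp : ∀ a b : V, s(a, b) ∈ Wf.bypass.edges → IsExposedEdge G a b := by
    intro a b hab
    have hmem := Walk.edges_bypass_subset Wf hab
    rw [hWf, Walk.edges_append, List.mem_append] at hmem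
    rcases hmem with h1 | h1
    · exact hW₁ a b h1
    · exact hW₂ a b h1
  have hpne : s(x, y) ∉ Wf.bypass.edges := fun hh => hxyW (Walk.edges_bypass_subset Wf hh)
  refine ⟨x, Walk.cons hadj Wf.bypass,
    (Walk.cons_isCycle_iff Wf.bypass hadj).mpr ⟨Walk.bypass_isPath Wf, hpne⟩, ?_, ?_⟩
  · rw [Walk.edges_cons]
    exact List.mem_cons_self
  · intro a b hab
    rw [Walk.edges_cons, List.mem_cons] at hab
    rcases hab with hab | hab
    · rcases Sym2.eq_iff.mp hab with ⟨rfl, rfl⟩ | ⟨rfl, rfl⟩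
      · exact h
      · exact h.symm2
    · exact hpexp a b hab
end

section
/- Let G be a finite simple graph, u a vertex of G, and x, y two vertices of G distinct from u with xy an edge of G, such that not both x and y lie in the closed neighborhood N_G[u]. Then xy is an exposed edge of the vertex-deleted graph G − u if and only if xy is an exposed edge of G. -/
variable {V : Type*}

/-- Let `u` be a vertex of `G` and `xy` an edge of `G` with `x, y ≠ u` and not both
`x` and `y` in the closed neighborhood of `u`. Then `xy` is exposed in the
vertex-deleted graph `G − u` if and only if `xy` is exposed in `G`. -/
theorem isExposedEdge_deleteVertex_iff [Fintype V] (G : SimpleGraph V)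
    (u x y : V) (hx : x ≠ u) (hy : y ≠ u) (hxy : G.Adj x y)
    (hN : ¬ (x ∈ insert u (G.neighborSet u) ∧ y ∈ insert u (G.neighborSet u))) :
    IsExposedEdge (G.induce ({u}ᶜ : Set V))
        ⟨x, by simpa using hx⟩ ⟨y, by simpa using hy⟩ ↔
      IsExposedEdge G x y := by

  classical
  set W : Set V := ({u}ᶜ : Set V) with hWdef
  set x' : W := ⟨x, by simpa [hWdef] using hx⟩ with hx'def
  set y' : W := ⟨y, by simpa [hWdef] using hy⟩ with hy'def
  -- no clique containing x and y contains u
  have hu : ∀ t : Set V, G.IsClique t → x ∈ t → y ∈ t → u ∉ t := by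
    intro t ht hxt hyt hut
    exact hN ⟨Set.mem_insert_iff.mpr (Or.inr (ht hut hxt hx.symm)),
      Set.mem_insert_iff.mpr (Or.inr (ht hut hyt hy.symm))⟩
  have himg : ∀ s : Set W, (G.induce W).IsClique s → G.IsClique (Subtype.val '' s) := by
    rintro s hs a ⟨a', ha', rfl⟩ b ⟨b', hb', rfl⟩ hne
    have := hs ha' hb' (fun h => hne (congrArg Subtype.val h))
    simpa using this
  have hpre : ∀ t : Set V, G.IsClique t → (G.induce W).IsClique (Subtype.val ⁻¹' t) := by
    intro t ht a ha b hb hne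
    have : G.Adj ↑a ↑b := ht ha hb (fun h => hne (Subtype.ext h))
    simpa using this
  have himgpre : ∀ t : Set V, t ⊆ W → Subtype.val '' (Subtype.val ⁻¹' t : Set W) = t := by
    intro t htW
    exact Set.image_preimage_eq_of_subset (by simpa using htW)
  have hsub : ∀ t : Set V, G.IsClique t → x ∈ t → y ∈ t → t ⊆ W := by
    intro t ht hxt hyt v hv
    have : v ≠ u := fun h => hu t ht hxt hyt (h ▸ hv)
    simpa [hWdef] using this
  -- maximality transfer
  have hmax_fwd : ∀ s : Set W, x' ∈ s → y' ∈ s → IsMaxClique (G.induce W) s →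
      IsMaxClique G (Subtype.val '' s) := by
    intro s hxs hys ⟨hcl, hmax⟩
    refine ⟨himg s hcl, ?_⟩
    intro t ht hst
    have hxt : x ∈ t := hst ⟨x', hxs, rfl⟩
    have hyt : y ∈ t := hst ⟨y', hys, rfl⟩
    have htW := hsub t ht hxt hyt
    have hst' : s ⊆ Subtype.val ⁻¹' t := by
      intro a ha; exact hst ⟨a, ha, rfl⟩
    have := hmax (Subtype.val ⁻¹' t) (hpre t ht) hst'
    calc t = Subtype.val '' (Subtype.val ⁻¹' t : Set W) := (himgpre t htW).symm
      _ = Subtype.val '' s := by rw [this]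
  have hmax_bwd : ∀ S : Set V, x ∈ S → y ∈ S → IsMaxClique G S →
      IsMaxClique (G.induce W) (Subtype.val ⁻¹' S) := by
    intro S hxS hyS ⟨hcl, hmax⟩
    have hSW := hsub S hcl hxS hyS
    refine ⟨hpre S hcl, ?_⟩
    intro t ht hst
    have h1 : S ⊆ Subtype.val '' t := by
      intro v hv
      exact ⟨⟨v, hSW hv⟩, hst hv, rfl⟩
    have h2 := hmax (Subtype.val '' t) (himg t ht) h1
    apply Set.image_injective.mpr Subtype.val_injective
    rw [h2, himgpre S hSW]
  have hpre_xy : (Subtype.val ⁻¹' ({x, y} : Set V) : Set W) = {x', y'} := by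
    ext a
    constructor
    · rintro (h | h)
      · exact Or.inl (Subtype.ext h)
      · exact Or.inr (Subtype.ext h)
    · rintro (rfl | rfl)
      · exact Or.inl rfl
      · exact Or.inr rfl
  have himg_xy : Subtype.val '' ({x', y'} : Set W) = ({x, y} : Set V) := by
    rw [Set.image_insert_eq, Set.image_singleton]
  have hadj' : (G.induce W).Adj x' y' := by simpa using hxy
  constructor
  · rintro ⟨hadj, ⟨s, ⟨hsmax, hxs, hys⟩, huniq⟩, hnf⟩
    refine ⟨hxy, ⟨Subtype.val '' s, ⟨hmax_fwd s hxs hys hsmax, ⟨x', hxs, rfl⟩, ⟨y', hys, rfl⟩⟩, ?_⟩, ?_⟩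
    · rintro T ⟨hTmax, hxT, hyT⟩
      have hTW := hsub T hTmax.1 hxT hyT
      have := huniq (Subtype.val ⁻¹' T) ⟨hmax_bwd T hxT hyT hTmax, hxT, hyT⟩
      calc T = Subtype.val '' (Subtype.val ⁻¹' T : Set W) := (himgpre T hTW).symm
        _ = Subtype.val '' s := by rw [this]
    · rintro ⟨_, hmaxxy⟩
      apply hnf
      refine ⟨hadj, ?_⟩
      have := hmax_bwd {x, y} (Or.inl rfl) (Or.inr rfl) hmaxxy
      rwa [hpre_xy] at this
  · rintro ⟨hadj, ⟨S, ⟨hSmax, hxS, hyS⟩, huniq⟩, hnf⟩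
    refine ⟨hadj', ⟨Subtype.val ⁻¹' S, ⟨hmax_bwd S hxS hyS hSmax, hxS, hyS⟩, ?_⟩, ?_⟩
    · rintro t ⟨htmax, hxt, hyt⟩
      have := huniq (Subtype.val '' t) ⟨hmax_fwd t hxt hyt htmax, ⟨x', hxt, rfl⟩, ⟨y', hyt, rfl⟩⟩
      apply Set.image_injective.mpr Subtype.val_injective
      rw [this, himgpre S (hsub S hSmax.1 hxS hyS)]
    · rintro ⟨_, hmaxxy⟩
      apply hnf
      refine ⟨hxy, ?_⟩
      have := hmax_fwd {x', y'} (Or.inl rfl) (Or.inr rfl) hmaxxy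
      rwa [himg_xy] at this
end

section
/- Let (X,d) be a finite metric space. Any maximal sequence of d-erasures starting from the complete graph on X (i.e., a sequence G_0, ..., G_m with G_0 complete, each G_{i+1} obtained from G_i by a d-erasure, and G_m having no exposed edge) terminates in a minimum spanning tree of (X,d). -/
set_option linter.unusedSectionVars false


variable {V : Type*}

variable {X : Type*} [MetricSpace X] [Fintype X]

/-- The total `d`-weight of a graph on the metric space `X`: the sum of the distances
between the endpoints of its edges. -/
noncomputable def totalWeight (G : SimpleGraph X) : ℝ :=
  ∑ e ∈ G.edgeSet.toFinite.toFinset, Sym2.lift ⟨fun a b => dist a b, fun a b => dist_comm a b⟩ e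

/-- `H` is obtained from `G` through a `d`-erasure: deletion of an exposed edge of
maximal weight among the exposed edges of `G`. -/
def DErasure (G H : SimpleGraph X) : Prop :=
  ∃ x y : X, IsExposedEdge G x y ∧ (∀ a b : X, IsExposedEdge G a b → dist a b ≤ dist x y) ∧
    H = G.deleteEdges {s(x, y)}

namespace MstAux

open SimpleGraph

/-! ### Combinatorial part: hereditarily simplicial graphs -/

section Comb

variable {W : Type*} [DecidableEq W] (G : SimpleGraph W)

/-- `s` is a simplicial vertex within the vertex set `A`. -/
def SimpIn (A : Finset W) (s : W) : Prop :=
  s ∈ A ∧ ∀ ⦃u⦄, u ∈ A → ∀ ⦃w⦄, w ∈ A → G.Adj s u → G.Adj s w → u ≠ w → G.Adj u w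

/-- Hereditarily simplicial: every nonempty finite vertex set has a simplicial vertex. -/
def HS : Prop := ∀ A : Finset W, A.Nonempty → ∃ s, SimpIn G A s

/-- Maximal clique within the vertex set `A` (as finsets). -/
def MCIn (A S : Finset W) : Prop :=
  S ⊆ A ∧ G.IsClique ↑S ∧ ∀ t : Finset W, t ⊆ A → G.IsClique ↑t → S ⊆ t → t = S

/-- Exposed edge within the vertex set `A`. -/
def ExpIn (A : Finset W) (x y : W) : Prop :=
  G.Adj x y ∧ x ∈ A ∧ y ∈ A ∧ (∃ z ∈ A, G.Adj x z ∧ G.Adj y z) ∧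
    ∃! S : Finset W, MCIn G A S ∧ x ∈ S ∧ y ∈ S

/-- All cliques containing the edge `xy` lie in one clique. -/
def UCE (x y : W) : Prop :=
  ∃ S₀ : Finset W, G.IsClique ↑S₀ ∧ ∀ t : Finset W, G.IsClique ↑t → x ∈ t → y ∈ t → t ⊆ S₀

def CompleteOn (A : Finset W) : Prop :=
  ∀ ⦃u⦄, u ∈ A → ∀ ⦃w⦄, w ∈ A → u ≠ w → G.Adj u w

variable {G}

lemma exists_MCIn {A t : Finset W} (ht : t ⊆ A) (hc : G.IsClique ↑t) :
    ∃ S : Finset W, MCIn G A S ∧ t ⊆ S := by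
  classical
  let cand : Finset (Finset W) := A.powerset.filter (fun S => G.IsClique ↑S ∧ t ⊆ S)
  have hne : cand.Nonempty := ⟨t, by
    simp only [cand, Finset.mem_filter, Finset.mem_powerset]
    exact ⟨ht, hc, le_refl t⟩⟩
  obtain ⟨S, hSmem, hSmax⟩ := cand.exists_max_image Finset.card hne
  simp only [cand, Finset.mem_filter, Finset.mem_powerset] at hSmem
  refine ⟨S, ⟨hSmem.1, hSmem.2.1, ?_⟩, hSmem.2.2⟩
  intro t' ht'A ht'c hSt'
  have ht'mem : t' ∈ cand := by
    simp only [cand, Finset.mem_filter, Finset.mem_powerset]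
    exact ⟨ht'A, ht'c, hSmem.2.2.trans hSt'⟩
  exact (Finset.eq_of_subset_of_card_le hSt' (hSmax t' ht'mem)).symm

lemma dirac (hHS : HS G) : ∀ (n : ℕ) (A : Finset W), A.card = n → A.Nonempty →
    ¬ CompleteOn G A →
    ∃ s₁ s₂, s₁ ≠ s₂ ∧ ¬ G.Adj s₁ s₂ ∧ SimpIn G A s₁ ∧ SimpIn G A s₂ := by
  intro n
  induction n using Nat.strong_induction_on with
  | _ n ih =>
  intro A hcard hne hnc
  obtain ⟨s, hsimp⟩ := hHS A hne
  have hsA : s ∈ A := hsimp.1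
  have hA'ne : (A.erase s).Nonempty := by
    rcases Finset.eq_empty_or_nonempty (A.erase s) with hemp | h
    · exfalso
      apply hnc
      intro u hu w hw huw
      exfalso
      rcases eq_or_ne u s with h1 | h1
      · rcases eq_or_ne w s with h2 | h2
        · exact huw (h1.trans h2.symm)
        · exact absurd (Finset.mem_erase.mpr ⟨h2, hw⟩) (hemp ▸ Finset.notMem_empty w)
      · exact absurd (Finset.mem_erase.mpr ⟨h1, hu⟩) (hemp ▸ Finset.notMem_empty u)
    · exact h
  by_cases hcomp : CompleteOn G (A.erase s)
  · rw [CompleteOn] at hnc; push_neg at hnc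
    obtain ⟨u, hu, w, hw, huw, hnadj⟩ := hnc
    have key : u = s ∨ w = s := by
      by_contra hh
      push_neg at hh
      exact hnadj (hcomp (Finset.mem_erase.mpr ⟨hh.1, hu⟩) (Finset.mem_erase.mpr ⟨hh.2, hw⟩) huw)
    obtain ⟨t, htA', hnst⟩ : ∃ t, t ∈ A.erase s ∧ ¬ G.Adj s t := by
      rcases key with rfl | rfl
      · exact ⟨w, Finset.mem_erase.mpr ⟨Ne.symm huw, hw⟩, hnadj⟩
      · exact ⟨u, Finset.mem_erase.mpr ⟨huw, hu⟩, fun h => hnadj h.symm⟩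
    have htsimp : SimpIn G A t := by
      refine ⟨(Finset.mem_erase.mp htA').2, ?_⟩
      intro u' hu' w' hw' htu' htw' hne'
      have hu's : u' ≠ s := fun hh => hnst (hh ▸ htu').symm
      have hw's : w' ≠ s := fun hh => hnst (hh ▸ htw').symm
      exact hcomp (Finset.mem_erase.mpr ⟨hu's, hu'⟩) (Finset.mem_erase.mpr ⟨hw's, hw'⟩) hne'
    exact ⟨s, t, fun hh => (Finset.mem_erase.mp htA').1 hh.symm, hnst, hsimp, htsimp⟩
  · have hcard' : (A.erase s).card < n := hcard ▸ Finset.card_erase_lt_of_mem hsA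
    obtain ⟨s₁, s₂, h12, hnadj, hss₁, hss₂⟩ := ih _ hcard' (A.erase s) rfl hA'ne hcomp
    have hone : ¬ G.Adj s s₁ ∨ ¬ G.Adj s s₂ := by
      by_contra hh
      push_neg at hh
      exact hnadj (hsimp.2 (Finset.mem_of_mem_erase hss₁.1) (Finset.mem_of_mem_erase hss₂.1)
        hh.1 hh.2 h12)
    obtain ⟨t, ht, hnst⟩ : ∃ t, SimpIn G (A.erase s) t ∧ ¬ G.Adj s t := by
      rcases hone with h | h
      · exact ⟨s₁, hss₁, h⟩
      · exact ⟨s₂, hss₂, h⟩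
    have htsimp : SimpIn G A t := by
      refine ⟨Finset.mem_of_mem_erase ht.1, ?_⟩
      intro u hu w hw htu htw hne'
      have hus : u ≠ s := fun hh => hnst (hh ▸ htu).symm
      have hws : w ≠ s := fun hh => hnst (hh ▸ htw).symm
      exact ht.2 (Finset.mem_erase.mpr ⟨hus, hu⟩) (Finset.mem_erase.mpr ⟨hws, hw⟩) htu htw hne'
    exact ⟨s, t, fun hh => (Finset.mem_erase.mp ht.1).1 hh.symm, hnst, hsimp, htsimp⟩

lemma expIn_of_simpIn {A : Finset W} {s c d : W} (hs : SimpIn G A s) (hcA : c ∈ A) (hdA : d ∈ A)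
    (hsc : G.Adj s c) (hsd : G.Adj s d) (hcd : c ≠ d) : ExpIn G A s c := by
  classical
  obtain ⟨hsA, hcl⟩ := hs
  set K : Finset W := insert s (A.filter fun v => G.Adj s v) with hK
  have hmemK : ∀ v, v ∈ K ↔ v = s ∨ (v ∈ A ∧ G.Adj s v) := by
    intro v; simp [hK]
  have hKsub : K ⊆ A := by
    intro v hv
    rcases (hmemK v).mp hv with rfl | hv
    · exact hsA
    · exact hv.1
  have hKcl : G.IsClique ↑K := by
    intro x hx y hy hxy
    rw [Finset.mem_coe] at hx hy
    rcases (hmemK x).mp hx with rfl | hx <;> rcases (hmemK y).mp hy with rfl | hy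
    · exact absurd rfl hxy
    · exact hy.2
    · exact hx.2.symm
    · exact hcl hx.1 hy.1 hx.2 hy.2 hxy
  have hsK : s ∈ K := (hmemK s).mpr (Or.inl rfl)
  have hcK : c ∈ K := (hmemK c).mpr (Or.inr ⟨hcA, hsc⟩)
  have hdK : d ∈ K := (hmemK d).mpr (Or.inr ⟨hdA, hsd⟩)
  have hKmax : MCIn G A K := by
    refine ⟨hKsub, hKcl, ?_⟩
    intro t htA htc hKt
    apply Finset.Subset.antisymm _ hKt
    intro v hv
    rcases eq_or_ne v s with rfl | hvs
    · exact hsK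
    · exact (hmemK v).mpr (Or.inr ⟨htA hv,
        htc (Finset.mem_coe.mpr (hKt hsK)) (Finset.mem_coe.mpr hv) (Ne.symm hvs)⟩)
  refine ⟨hsc, hsA, hcA, ⟨d, hdA, hsd, hKcl (Finset.mem_coe.mpr hcK) (Finset.mem_coe.mpr hdK) hcd⟩,
    K, ⟨hKmax, hsK, hcK⟩, ?_⟩
  rintro S' ⟨hS'max, hsS', hcS'⟩
  have hsub : S' ⊆ K := by
    intro v hv
    rcases eq_or_ne v s with rfl | hvs
    · exact hsK
    · exact (hmemK v).mpr (Or.inr ⟨hS'max.1 hv,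
        hS'max.2.1 (Finset.mem_coe.mpr hsS') (Finset.mem_coe.mpr hv) (Ne.symm hvs)⟩)
  exact (hS'max.2.2 K hKsub hKcl hsub).symm

lemma expIn_lift {A : Finset W} {s c d : W} (hs : SimpIn G A s)
    (hcA : c ∈ A.erase s) (hdA : d ∈ A.erase s) (hnadj : ¬ (G.Adj s c ∧ G.Adj s d))
    (he : ExpIn G (A.erase s) c d) : ExpIn G A c d := by
  obtain ⟨hcd, -, -, ⟨z, hz, hz1, hz2⟩, hEU⟩ := he
  have hsc : s ≠ c := fun hh => (Finset.mem_erase.mp hcA).1 hh.symm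
  have hsd : s ≠ d := fun hh => (Finset.mem_erase.mp hdA).1 hh.symm
  have hiff : ∀ M : Finset W,
      (MCIn G A M ∧ c ∈ M ∧ d ∈ M) ↔ (MCIn G (A.erase s) M ∧ c ∈ M ∧ d ∈ M) := by
    intro M
    constructor
    · rintro ⟨⟨hMA, hMcl, hMmax⟩, hcM, hdM⟩
      have hsM : s ∉ M := by
        intro hsM
        exact hnadj ⟨hMcl (Finset.mem_coe.mpr hsM) (Finset.mem_coe.mpr hcM) hsc,
          hMcl (Finset.mem_coe.mpr hsM) (Finset.mem_coe.mpr hdM) hsd⟩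
      refine ⟨⟨?_, hMcl, ?_⟩, hcM, hdM⟩
      · intro v hv; exact Finset.mem_erase.mpr ⟨fun hh => hsM (hh ▸ hv), hMA hv⟩
      · intro t htA htc hMt
        exact hMmax t (htA.trans (Finset.erase_subset s A)) htc hMt
    · rintro ⟨⟨hMA, hMcl, hMmax⟩, hcM, hdM⟩
      refine ⟨⟨hMA.trans (Finset.erase_subset s A), hMcl, ?_⟩, hcM, hdM⟩
      intro t htA htc hMt
      have hsT : s ∉ t := by
        intro hst
        exact hnadj ⟨htc (Finset.mem_coe.mpr hst) (Finset.mem_coe.mpr (hMt hcM)) hsc,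
          htc (Finset.mem_coe.mpr hst) (Finset.mem_coe.mpr (hMt hdM)) hsd⟩
      exact hMmax t (fun v hv => Finset.mem_erase.mpr ⟨fun hh => hsT (hh ▸ hv), htA hv⟩) htc hMt
  obtain ⟨S, hS, huniq⟩ := hEU
  exact ⟨hcd, Finset.mem_of_mem_erase hcA, Finset.mem_of_mem_erase hdA,
    ⟨z, Finset.mem_of_mem_erase hz, hz1, hz2⟩,
    S, (hiff S).mpr hS, fun y hy => huniq y ((hiff y).mp hy)⟩

lemma ExpIn.symm {A : Finset W} {x y : W} (h : ExpIn G A x y) : ExpIn G A y x := by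
  obtain ⟨hadj, hx, hy, ⟨z, hz, h1, h2⟩, S, hS, hun⟩ := h
  exact ⟨hadj.symm, hy, hx, ⟨z, hz, h2, h1⟩, S, ⟨hS.1, hS.2.2, hS.2.1⟩,
    fun y' hy' => hun y' ⟨hy'.1, hy'.2.2, hy'.2.1⟩⟩

lemma lift_walk {A : Finset W} {s : W} (hsimp : SimpIn G A s) :
    ∀ {a b : W} (w : G.Walk a b), (∀ v ∈ w.support, v ∈ A.erase s) →
    (∀ e ∈ w.edges, ∃ u v, ExpIn G (A.erase s) u v ∧ e = s(u, v)) →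
    ∃ w2 : G.Walk a b, (∀ v ∈ w2.support, v ∈ A) ∧
      ∀ e ∈ w2.edges, (∃ u v, ExpIn G A u v ∧ e = s(u, v)) ∧ (e ∈ w.edges ∨ s ∈ e) := by
  intro a b w
  induction w with
  | nil =>
    intro hsupp _
    refine ⟨Walk.nil, ?_, by simp⟩
    intro v hv
    rw [Walk.support_nil, List.mem_singleton] at hv
    subst hv
    exact Finset.mem_of_mem_erase (hsupp _ (by simp))
  | @cons a c b h p ih =>
    intro hsupp hedge
    have hsuppP : ∀ v ∈ p.support, v ∈ A.erase s := fun v hv => hsupp v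
      (by rw [Walk.support_cons]; exact List.mem_cons_of_mem _ hv)
    have hedgeP : ∀ e ∈ p.edges, ∃ u v, ExpIn G (A.erase s) u v ∧ e = s(u, v) := fun e hee =>
      hedge e (by rw [Walk.edges_cons]; exact List.mem_cons_of_mem _ hee)
    obtain ⟨w2, hw2supp, hw2edge⟩ := ih hsuppP hedgeP
    have haA : a ∈ A.erase s := hsupp a (Walk.start_mem_support _)
    have hcA : c ∈ A.erase s := hsuppP c (Walk.start_mem_support _)
    by_cases hyp : G.Adj s a ∧ G.Adj s c
    · have he1 : ExpIn G A s a := expIn_of_simpIn hsimp (Finset.mem_of_mem_erase haA)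
        (Finset.mem_of_mem_erase hcA) hyp.1 hyp.2 h.ne
      have he2 : ExpIn G A s c := expIn_of_simpIn hsimp (Finset.mem_of_mem_erase hcA)
        (Finset.mem_of_mem_erase haA) hyp.2 hyp.1 h.ne'
      refine ⟨Walk.cons hyp.1.symm (Walk.cons hyp.2 w2), ?_, ?_⟩
      · intro v hv
        rw [Walk.support_cons, Walk.support_cons] at hv
        rcases List.mem_cons.mp hv with rfl | hv'
        · exact Finset.mem_of_mem_erase haA
        · rcases List.mem_cons.mp hv' with rfl | hv''
          · exact hsimp.1
          · exact hw2supp v hv''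
      · intro e he
        rw [Walk.edges_cons, Walk.edges_cons] at he
        rcases List.mem_cons.mp he with rfl | he'
        · exact ⟨⟨s, a, he1, Sym2.eq_swap⟩, Or.inr (by simp)⟩
        · rcases List.mem_cons.mp he' with rfl | he''
          · exact ⟨⟨s, c, he2, rfl⟩, Or.inr (by simp)⟩
          · obtain ⟨h1, h2⟩ := hw2edge e he''
            refine ⟨h1, ?_⟩
            rcases h2 with h2 | h2
            · exact Or.inl (by rw [Walk.edges_cons]; exact List.mem_cons_of_mem _ h2)
            · exact Or.inr h2
    · have hlift : ExpIn G A a c := by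
        obtain ⟨u, v, hexp, heq⟩ := hedge s(a, c)
          (by rw [Walk.edges_cons]; exact List.mem_cons_self)
        have hexp' : ExpIn G (A.erase s) a c := by
          rcases Sym2.eq_iff.mp heq with ⟨rfl, rfl⟩ | ⟨rfl, rfl⟩
          · exact hexp
          · exact hexp.symm
        exact expIn_lift hsimp haA hcA hyp hexp'
      refine ⟨Walk.cons h w2, ?_, ?_⟩
      · intro v hv
        rw [Walk.support_cons] at hv
        rcases List.mem_cons.mp hv with rfl | hv'
        · exact Finset.mem_of_mem_erase haA
        · exact hw2supp v hv'
      · intro e he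
        rw [Walk.edges_cons] at he
        rcases List.mem_cons.mp he with rfl | he'
        · exact ⟨⟨a, c, hlift, rfl⟩, Or.inl (by rw [Walk.edges_cons]; exact List.mem_cons_self)⟩
        · obtain ⟨h1, h2⟩ := hw2edge e he'
          refine ⟨h1, ?_⟩
          rcases h2 with h2 | h2
          · exact Or.inl (by rw [Walk.edges_cons]; exact List.mem_cons_of_mem _ h2)
          · exact Or.inr h2

lemma exp_walk (hHS : HS G) : ∀ (n : ℕ) (A : Finset W) (a b z : W), A.card = n →
    a ∈ A → b ∈ A → z ∈ A → G.Adj a b → G.Adj a z → G.Adj b z →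
    ∃ w : G.Walk a b, (∀ v ∈ w.support, v ∈ A) ∧
      ∀ e ∈ w.edges, e ≠ s(a, b) ∧ ∃ u v, ExpIn G A u v ∧ e = s(u, v) := by
  intro n
  induction n using Nat.strong_induction_on with
  | _ n ih =>
  intro A a b z hcard haA hbA hzA hab haz hbz
  by_cases hcomp : CompleteOn G A
  · have hsimpa : SimpIn G A a := ⟨haA, fun u hu w hw _ _ hne => hcomp hu hw hne⟩
    have hsimpz : SimpIn G A z := ⟨hzA, fun u hu w hw _ _ hne => hcomp hu hw hne⟩
    have he1 : ExpIn G A a z := expIn_of_simpIn hsimpa hzA hbA haz hab hbz.ne'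
    have he2 : ExpIn G A z b := expIn_of_simpIn hsimpz hbA haA hbz.symm haz.symm hab.ne'
    refine ⟨Walk.cons haz (Walk.cons hbz.symm Walk.nil), ?_, ?_⟩
    · intro v hv
      rw [Walk.support_cons, Walk.support_cons, Walk.support_nil] at hv
      rcases List.mem_cons.mp hv with rfl | hv'
      · exact haA
      · rcases List.mem_cons.mp hv' with rfl | hv''
        · exact hzA
        · rw [List.mem_singleton] at hv''; subst hv''; exact hbA
    · intro e he
      rw [Walk.edges_cons, Walk.edges_cons, Walk.edges_nil] at he
      rcases List.mem_cons.mp he with rfl | he'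
      · refine ⟨?_, a, z, he1, rfl⟩
        intro heq
        rcases Sym2.eq_iff.mp heq with ⟨-, h2⟩ | ⟨h1, -⟩
        · exact hbz.ne' h2
        · exact hab.ne h1
      · rcases List.mem_cons.mp he' with rfl | he''
        · refine ⟨?_, z, b, he2, rfl⟩
          intro heq
          rcases Sym2.eq_iff.mp heq with ⟨h1, -⟩ | ⟨-, h2⟩
          · exact haz.ne' h1
          · exact hab.ne h2.symm
        · simp at he''
  · have hAne : A.Nonempty := ⟨a, haA⟩
    obtain ⟨s₁, s₂, h12, hnadj12, hs₁, hs₂⟩ := dirac hHS A.card A rfl hAne hcomp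
    obtain ⟨s, hsimp, hsa, hsb⟩ : ∃ s, SimpIn G A s ∧ s ≠ a ∧ s ≠ b := by
      by_cases h1 : s₁ = a ∨ s₁ = b
      · refine ⟨s₂, hs₂, ?_, ?_⟩
        · rintro rfl
          rcases h1 with rfl | rfl
          · exact h12 rfl
          · exact hnadj12 hab.symm
        · rintro rfl
          rcases h1 with rfl | rfl
          · exact hnadj12 hab
          · exact h12 rfl
      · push_neg at h1
        exact ⟨s₁, hs₁, h1.1, h1.2⟩
    by_cases hyp : G.Adj s a ∧ G.Adj s b
    · have he1 : ExpIn G A s a := expIn_of_simpIn hsimp haA hbA hyp.1 hyp.2 hab.ne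
      have he2 : ExpIn G A s b := expIn_of_simpIn hsimp hbA haA hyp.2 hyp.1 hab.ne'
      refine ⟨Walk.cons hyp.1.symm (Walk.cons hyp.2 Walk.nil), ?_, ?_⟩
      · intro v hv
        rw [Walk.support_cons, Walk.support_cons, Walk.support_nil] at hv
        rcases List.mem_cons.mp hv with rfl | hv'
        · exact haA
        · rcases List.mem_cons.mp hv' with rfl | hv''
          · exact hsimp.1
          · rw [List.mem_singleton] at hv''; subst hv''; exact hbA
      · intro e he
        rw [Walk.edges_cons, Walk.edges_cons, Walk.edges_nil] at he
        rcases List.mem_cons.mp he with rfl | he'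
        · refine ⟨?_, s, a, he1, Sym2.eq_swap⟩
          intro heq
          rcases Sym2.eq_iff.mp heq with ⟨-, h2⟩ | ⟨h1, -⟩
          · exact hsb h2
          · exact hab.ne h1
        · rcases List.mem_cons.mp he' with rfl | he''
          · refine ⟨?_, s, b, he2, rfl⟩
            intro heq
            rcases Sym2.eq_iff.mp heq with ⟨h1, -⟩ | ⟨h1, h2⟩
            · exact hsa h1
            · exact hsb h1
          · simp at he''
    · have hz' : ∃ z', z' ∈ A.erase s ∧ G.Adj a z' ∧ G.Adj b z' := by
        rcases eq_or_ne z s with hzs | hzs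
        · exact absurd ⟨hzs ▸ haz.symm, hzs ▸ hbz.symm⟩ hyp
        · exact ⟨z, Finset.mem_erase.mpr ⟨hzs, hzA⟩, haz, hbz⟩
      obtain ⟨z', hz'A, haz', hbz'⟩ := hz'
      have hcard' : (A.erase s).card < n := hcard ▸ Finset.card_erase_lt_of_mem hsimp.1
      obtain ⟨w, hwsupp, hwedge⟩ := ih _ hcard' (A.erase s) a b z' rfl
        (Finset.mem_erase.mpr ⟨Ne.symm hsa, haA⟩) (Finset.mem_erase.mpr ⟨Ne.symm hsb, hbA⟩)
        hz'A hab haz' hbz'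
      obtain ⟨w2, hw2supp, hw2edge⟩ := lift_walk hsimp w hwsupp (fun e he => (hwedge e he).2)
      refine ⟨w2, hw2supp, fun e he => ⟨?_, (hw2edge e he).1⟩⟩
      rcases (hw2edge e he).2 with hin | hsin
      · exact (hwedge e hin).1
      · intro heq
        rw [heq, Sym2.mem_iff] at hsin
        rcases hsin with h1 | h1
        · exact hsa h1
        · exact hsb h1

lemma HS_top : HS (⊤ : SimpleGraph W) := by
  rintro A ⟨a, ha⟩
  refine ⟨a, ha, ?_⟩
  intro u _ w _ _ _ hne
  simpa using hne

lemma HS_delete (hHS : HS G) {x y : W} (hxy : G.Adj x y) (huce : UCE G x y) :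
    HS (G.deleteEdges {s(x, y)}) := by
  intro A hAne
  have hG'adj : ∀ u v, (G.deleteEdges {s(x, y)}).Adj u v ↔ G.Adj u v ∧ s(u, v) ≠ s(x, y) := by
    intro u v; rw [deleteEdges_adj]; simp
  by_cases hxyA : x ∈ A ∧ y ∈ A
  · by_cases hcomp : CompleteOn G A
    · refine ⟨x, hxyA.1, ?_⟩
      intro u hu w hw hxu hxw huw
      rw [hG'adj] at hxu hxw ⊢
      have huy : u ≠ y := by
        intro h
        exact hxu.2 (by rw [h])
      have hwy : w ≠ y := fun h => hxw.2 (by rw [h])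
      refine ⟨hcomp hu hw huw, ?_⟩
      intro heq
      rcases Sym2.eq_iff.mp heq with ⟨h1, h2⟩ | ⟨h1, h2⟩
      · exact hwy h2
      · exact huy h1
    · obtain ⟨s₁, s₂, h12, hnadj, hs₁, hs₂⟩ := dirac hHS A.card A rfl hAne hcomp
      have hgood : ∀ s, SimpIn G A s → (s = x ∨ s = y ∨ ¬(G.Adj s x ∧ G.Adj s y)) →
          ∃ t, SimpIn (G.deleteEdges {s(x, y)}) A t := by
        intro s hsimp hcases
        refine ⟨s, hsimp.1, ?_⟩
        intro u hu w hw hsu hsw huw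
        rw [hG'adj] at hsu hsw ⊢
        refine ⟨hsimp.2 hu hw hsu.1 hsw.1 huw, ?_⟩
        intro heq
        rcases Sym2.eq_iff.mp heq with ⟨h1, h2⟩ | ⟨h1, h2⟩
        · subst h1; subst h2
          rcases hcases with rfl | rfl | hno
          · exact G.loopless.irrefl _ hsu.1
          · exact G.loopless.irrefl _ hsw.1
          · exact hno ⟨hsu.1, hsw.1⟩
        · subst h1; subst h2
          rcases hcases with rfl | rfl | hno
          · exact G.loopless.irrefl _ hsw.1
          · exact G.loopless.irrefl _ hsu.1
          · exact hno ⟨hsw.1, hsu.1⟩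
      have hnotbad : ∀ s, ¬(s ≠ x ∧ s ≠ y ∧ G.Adj s x ∧ G.Adj s y) →
          (s = x ∨ s = y ∨ ¬(G.Adj s x ∧ G.Adj s y)) := by
        intro s h
        by_cases h1 : s = x
        · exact Or.inl h1
        by_cases h2 : s = y
        · exact Or.inr (Or.inl h2)
        refine Or.inr (Or.inr ?_)
        intro hh
        exact h ⟨h1, h2, hh.1, hh.2⟩
      by_cases hb₁ : s₁ ≠ x ∧ s₁ ≠ y ∧ G.Adj s₁ x ∧ G.Adj s₁ y
      · by_cases hb₂ : s₂ ≠ x ∧ s₂ ≠ y ∧ G.Adj s₂ x ∧ G.Adj s₂ y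
        · exfalso
          obtain ⟨S₀, hS₀cl, hS₀max⟩ := huce
          have hmem : ∀ s, s ≠ x → s ≠ y → G.Adj s x → G.Adj s y → s ∈ S₀ := by
            intro s hsx hsy hax hay
            have hclq : G.IsClique (↑({s, x, y} : Finset W)) := by
              intro u hu v hv huv
              simp only [Finset.coe_insert, Set.mem_insert_iff, Finset.coe_singleton,
                Set.mem_singleton_iff] at hu hv
              rcases hu with rfl | rfl | rfl <;> rcases hv with rfl | rfl | rfl <;>
                first
                  | exact absurd rfl huv
                  | exact hax | exact hax.symm | exact hay | exact hay.symm
                  | exact hxy | exact hxy.symm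
            exact hS₀max {s, x, y} hclq (by simp) (by simp) (by simp)
          have h1 := hmem s₁ hb₁.1 hb₁.2.1 hb₁.2.2.1 hb₁.2.2.2
          have h2 := hmem s₂ hb₂.1 hb₂.2.1 hb₂.2.2.1 hb₂.2.2.2
          exact hnadj (hS₀cl (Finset.mem_coe.mpr h1) (Finset.mem_coe.mpr h2) h12)
        · exact hgood s₂ hs₂ (hnotbad s₂ hb₂)
      · exact hgood s₁ hs₁ (hnotbad s₁ hb₁)
  · obtain ⟨s, hsimp⟩ := hHS A hAne
    refine ⟨s, hsimp.1, ?_⟩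
    intro u hu w hw hsu hsw huw
    rw [hG'adj] at hsu hsw ⊢
    refine ⟨hsimp.2 hu hw hsu.1 hsw.1 huw, ?_⟩
    intro heq
    rcases Sym2.eq_iff.mp heq with ⟨h1, h2⟩ | ⟨h1, h2⟩
    · exact hxyA ⟨h1 ▸ hu, h2 ▸ hw⟩
    · exact hxyA ⟨h2 ▸ hw, h1 ▸ hu⟩

end Comb

/-! ### Reachability tools -/

section Reach

variable {W : Type*} {G H : SimpleGraph W}

lemma reachable_transfer (h : ∀ ⦃a b : W⦄, G.Adj a b → H.Reachable a b) {u v : W}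
    (huv : G.Reachable u v) : H.Reachable u v := by
  obtain ⟨p⟩ := huv
  induction p with
  | nil => exact Reachable.refl _
  | cons h' _ ih => exact (h h').trans ih

lemma reach_or {x y : W} : ∀ {w : W}, G.Reachable w x →
    (G.deleteEdges {s(x, y)}).Reachable w x ∨ (G.deleteEdges {s(x, y)}).Reachable w y := by
  intro w hwx
  obtain ⟨p⟩ := hwx
  induction p with
  | nil => exact Or.inl (Reachable.refl _)
  | @cons w w1 x h p ih =>
    by_cases he : s(w, w1) = s(x, y)
    · rcases Sym2.eq_iff.mp he with ⟨rfl, rfl⟩ | ⟨rfl, rfl⟩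
      · exact Or.inl (Reachable.refl _)
      · exact Or.inr (Reachable.refl _)
    · have hadj : (G.deleteEdges {s(x, y)}).Adj w w1 := by
        rw [deleteEdges_adj]
        exact ⟨h, by simpa using he⟩
      rcases ih with h1 | h1
      · exact Or.inl (hadj.reachable.trans h1)
      · exact Or.inr (hadj.reachable.trans h1)

lemma exists_crossing {u : W} : ∀ {a v : W} (_ : G.Walk a v), H.Reachable u a →
    ¬ H.Reachable u v → ∃ c d, G.Adj c d ∧ H.Reachable u c ∧ ¬ H.Reachable u d := by
  intro a v p
  induction p with
  | nil => exact fun hua huv => absurd hua huv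
  | @cons a a1 v h p ih =>
    intro hua huv
    by_cases h1 : H.Reachable u a1
    · exact ih h1 huv
    · exact ⟨a, a1, h, hua, h1⟩

end Reach

/-! ### Acyclicity from triangle-freeness and HS -/

lemma acyclic_of_HS_trianglefree {W : Type*} [DecidableEq W] {G : SimpleGraph W}
    (hHS : HS G) (hfac : ∀ x y z : W, G.Adj x y → G.Adj x z → G.Adj y z → False) :
    G.IsAcyclic := by
  intro v c hc
  have hvsup : v ∈ c.support := Walk.start_mem_support c
  obtain ⟨s, hsimp⟩ := hHS c.support.toFinset ⟨v, List.mem_toFinset.mpr hvsup⟩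
  have hs : s ∈ c.support := List.mem_toFinset.mp hsimp.1
  have hc' : (c.rotate s hs).IsCycle := hc.rotate hs
  have hperm : ∀ u, u ∈ (c.rotate s hs).support.tail → u ∈ c.support := by
    intro u hu
    have h1 := (Walk.support_rotate c s hs).mem_iff.mp hu
    rw [Walk.support_eq_cons c]
    exact List.mem_cons_of_mem _ h1
  revert hc' hperm
  generalize c.rotate s hs = c'
  intro hc' hperm
  cases c' with
  | nil => exact hc'.ne_nil rfl
  | @cons _ u _ hadj q =>
    have hqrnotnil : ¬ q.reverse.Nil := by
      intro hnil
      have hsu : s = u := hnil.eq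
      exact G.loopless.irrefl s (hsu ▸ hadj)
    obtain ⟨w, hadj2, r, hqr⟩ := (Walk.not_nil_iff).mp hqrnotnil
    · have hswq : s(s, w) ∈ q.edges := by
        have h1 : s(s, w) ∈ q.reverse.edges := by
          rw [hqr, Walk.edges_cons]
          exact List.mem_cons_self
        rw [Walk.edges_reverse] at h1
        exact List.mem_reverse.mp h1
      have hnodup : (Walk.cons hadj q).edges.Nodup := hc'.edges_nodup
      have huw : u ≠ w := by
        intro h
        subst h
        rw [Walk.edges_cons] at hnodup
        exact (List.nodup_cons.mp hnodup).1 hswq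
      have huA : u ∈ c.support.toFinset := by
        apply List.mem_toFinset.mpr
        apply hperm
        rw [Walk.support_cons]
        exact Walk.start_mem_support q
      have hwA : w ∈ c.support.toFinset := by
        apply List.mem_toFinset.mpr
        apply hperm
        rw [Walk.support_cons]
        have h1 : w ∈ q.reverse.support := by
          rw [hqr, Walk.support_cons]
          exact List.mem_cons_of_mem _ (Walk.start_mem_support r)
        rw [Walk.support_reverse] at h1
        exact List.mem_reverse.mp h1
      exact hfac s u w hadj hadj2 (hsimp.2 huA hwA hadj hadj2 huw)

/-! ### Metric part -/

section Metric

variable {Y : Type*} [MetricSpace Y] [Fintype Y]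

noncomputable def ew : Sym2 Y → ℝ := Sym2.lift ⟨fun a b => dist a b, fun a b => dist_comm a b⟩

omit [Fintype Y] in
@[simp] lemma ew_mk (a b : Y) : ew s(a, b) = dist a b := rfl

/-- The subgraph of edges of weight at most `w`. -/
def lightSub (G : SimpleGraph Y) (w : ℝ) : SimpleGraph Y where
  Adj a b := G.Adj a b ∧ dist a b ≤ w
  symm := by
    constructor
    intro a b hab
    exact ⟨hab.1.symm, le_of_eq_of_le (dist_comm b a) hab.2⟩
  loopless := ⟨fun a h => G.loopless.irrefl a h.1⟩

/-- The light-path invariant. -/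
def Inv3 (G : SimpleGraph Y) : Prop :=
  ∀ u v : Y, u ≠ v → ¬ G.Adj u v → (lightSub G (dist u v)).Reachable u v

omit [Fintype Y] in
lemma lightSub_le {G : SimpleGraph Y} {w : ℝ} : lightSub G w ≤ G := by
  intro a b h
  exact h.1

omit [Fintype Y] in
lemma lightSub_mono {G : SimpleGraph Y} {w w' : ℝ} (h : w ≤ w') :
    lightSub G w ≤ lightSub G w' := by
  intro a b hab
  exact ⟨hab.1, le_trans hab.2 h⟩

noncomputable def EF (G : SimpleGraph Y) : Finset (Sym2 Y) := G.edgeSet.toFinite.toFinset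

lemma totalWeight_eq (G : SimpleGraph Y) : totalWeight G = ∑ e ∈ EF G, ew e := rfl

lemma mem_EF {G : SimpleGraph Y} {e : Sym2 Y} : e ∈ EF G ↔ e ∈ G.edgeSet :=
  Set.Finite.mem_toFinset _

lemma EF_delete [DecidableEq Y] (G : SimpleGraph Y) (f : Sym2 Y) :
    EF (G.deleteEdges {f}) = (EF G).erase f := by
  ext e
  rw [mem_EF, Finset.mem_erase, mem_EF, edgeSet_deleteEdges]
  simp only [Set.mem_diff, Set.mem_singleton_iff]
  tauto

lemma EF_sup_edge [DecidableEq Y] (G : SimpleGraph Y) {c d : Y} (hcd : c ≠ d) :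
    EF (G ⊔ fromEdgeSet {s(c, d)}) = insert s(c, d) (EF G) := by
  ext e
  rw [mem_EF, Finset.mem_insert, mem_EF, edgeSet_sup, edgeSet_fromEdgeSet]
  simp only [Set.mem_union, Set.mem_diff, Set.mem_singleton_iff, Set.mem_setOf_eq]
  constructor
  · rintro (h | ⟨rfl, -⟩)
    · exact Or.inr h
    · exact Or.inl rfl
  · rintro (rfl | h)
    · exact Or.inr ⟨rfl, by rw [Sym2.diagSet_eq_setOfPred_isDiag, Set.mem_setOf_eq, Sym2.isDiag_iff_proj_eq]; exact hcd⟩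
    · exact Or.inl h

lemma ew_nonneg (e : Sym2 Y) : 0 ≤ ew e := by
  induction e using Sym2.ind with
  | _ a b => exact dist_nonneg

lemma reach_along {W' : Type*} {G H : SimpleGraph W'} : ∀ {a b : W'} (w : G.Walk a b),
    (∀ e ∈ w.edges, ∀ c d, e = s(c, d) → H.Adj c d) → H.Reachable a b := by
  intro a b w
  induction w with
  | nil => exact fun _ => Reachable.refl _
  | @cons a c b h p ih =>
    intro hedges
    have h1 : H.Adj a c :=
      hedges s(a, c) (by rw [Walk.edges_cons]; exact List.mem_cons_self) a c rfl
    exact h1.reachable.trans (ih fun e he c' d' heq =>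
      hedges e (by rw [Walk.edges_cons]; exact List.mem_cons_of_mem _ he) c' d' heq)

/-- The key weight-exchange induction: a spanning tree satisfying the light-path
invariant weighs at most any connected graph. -/
lemma tw_le_of_connected [DecidableEq Y] {T : SimpleGraph Y} (hacyc : T.IsAcyclic)
    (hinv : Inv3 T) :
    ∀ (n : ℕ) (H : SimpleGraph Y), ((EF H) \ (EF T)).card ≤ n → H.Connected →
      totalWeight T ≤ totalWeight H := by
  have base : ∀ H : SimpleGraph Y, EF H ⊆ EF T → H.Connected →
      totalWeight T ≤ totalWeight H := by
    intro H hsub hconn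
    have hsub2 : EF T ⊆ EF H := by
      intro e he
      revert he
      induction e using Sym2.ind with
      | _ a b =>
      intro he
      by_contra heH
      have hTadj : T.Adj a b := (mem_edgeSet _).mp (mem_EF.mp he)
      have hnH : ¬ H.Adj a b := fun h => heH (mem_EF.mpr ((mem_edgeSet _).mpr h))
      have hbridge := isAcyclic_iff_forall_adj_isBridge.mp hacyc hTadj
      rw [isBridge_iff] at hbridge
      apply hbridge
      refine reachable_transfer ?_ (hconn.preconnected a b)
      intro u v huv
      have hTuv : T.Adj u v := (mem_edgeSet _).mp (mem_EF.mp (hsub (mem_EF.mpr ((mem_edgeSet _).mpr huv))))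
      have hne : s(u, v) ≠ s(a, b) := by
        intro heq
        rcases Sym2.eq_iff.mp heq with ⟨rfl, rfl⟩ | ⟨rfl, rfl⟩
        · exact hnH huv
        · exact hnH huv.symm
      have : (T.deleteEdges {s(a, b)}).Adj u v := by
        rw [deleteEdges_adj]
        exact ⟨hTuv, by simpa using hne⟩
      exact this.reachable
    have heq : EF T = EF H := Finset.Subset.antisymm hsub2 hsub
    rw [totalWeight_eq, totalWeight_eq, heq]
  intro n
  induction n with
  | zero =>
    intro H hcard hconn
    have hemp : EF H \ EF T = ∅ := Finset.card_eq_zero.mp (Nat.le_zero.mp hcard)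
    exact base H (Finset.sdiff_eq_empty_iff_subset.mp hemp) hconn
  | succ n ih =>
    intro H hcard hconn
    rcases Finset.eq_empty_or_nonempty (EF H \ EF T) with hemp | ⟨f, hf⟩
    · exact base H (Finset.sdiff_eq_empty_iff_subset.mp hemp) hconn
    · have hfH : f ∈ EF H := (Finset.mem_sdiff.mp hf).1
      have hfT : f ∉ EF T := (Finset.mem_sdiff.mp hf).2
      have hfdiff : f ∈ EF H \ EF T := hf
      clear hf
      revert hfH hfT hfdiff
      induction f using Sym2.ind with
      | _ u v =>
      intro hfH hfT hfdiff
      have huv : H.Adj u v := (mem_edgeSet _).mp (mem_EF.mp hfH)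
      have hTuv : ¬ T.Adj u v := fun h => hfT (mem_EF.mpr ((mem_edgeSet _).mpr h))
      have hune : u ≠ v := huv.ne
      by_cases hr : (H.deleteEdges {s(u, v)}).Reachable u v
      · have hreachu : ∀ w, (H.deleteEdges {s(u, v)}).Reachable w u := by
          intro w
          rcases reach_or (hconn.preconnected w u) with h | h
          · exact h
          · exact h.trans hr.symm
        have hconn' : (H.deleteEdges {s(u, v)}).Connected := by
          rw [connected_iff]
          exact ⟨fun a b => (hreachu a).trans (hreachu b).symm, hconn.nonempty⟩
        have hEF' : EF (H.deleteEdges {s(u, v)}) = (EF H).erase s(u, v) := EF_delete H _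
        have hdiff' : EF (H.deleteEdges {s(u, v)}) \ EF T = (EF H \ EF T).erase s(u, v) := by
          rw [hEF']
          ext e
          simp only [Finset.mem_sdiff, Finset.mem_erase]
          tauto
        have hcard' : (EF (H.deleteEdges {s(u, v)}) \ EF T).card ≤ n := by
          rw [hdiff', Finset.card_erase_of_mem hfdiff]
          omega
        have hle := ih (H.deleteEdges {s(u, v)}) hcard' hconn'
        have hsum : totalWeight H = totalWeight (H.deleteEdges {s(u, v)}) + ew s(u, v) := by
          rw [totalWeight_eq, totalWeight_eq, hEF']
          exact (Finset.sum_erase_add _ _ hfH).symm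
        have hnn := ew_nonneg (s(u, v) : Sym2 Y)
        linarith
      · obtain ⟨p⟩ := hinv u v hune hTuv
        obtain ⟨c, d, hcd_adj, huc, hnud⟩ := exists_crossing p (Reachable.refl u) hr
        have hTcd : T.Adj c d := hcd_adj.1
        have hdist : dist c d ≤ dist u v := hcd_adj.2
        have hne_cd_f : s(c, d) ≠ s(u, v) := by
          intro heq
          rcases Sym2.eq_iff.mp heq with ⟨rfl, rfl⟩ | ⟨rfl, rfl⟩
          · exact hTuv hTcd
          · exact hTuv hTcd.symm
        have hHcd : ¬ H.Adj c d := by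
          intro h
          have hadj' : (H.deleteEdges {s(u, v)}).Adj c d := by
            rw [deleteEdges_adj]
            exact ⟨h, by simpa using hne_cd_f⟩
          exact hnud (huc.trans hadj'.reachable)
        have hH''cd : (H.deleteEdges {s(u, v)} ⊔ fromEdgeSet {s(c, d)}).Adj c d := by
          exact (sup_adj _ _ _ _).mpr (Or.inr (by rw [fromEdgeSet_adj]; exact ⟨rfl, hTcd.ne⟩))
        have hmono : ∀ {a b : Y}, (H.deleteEdges {s(u, v)}).Reachable a b →
            (H.deleteEdges {s(u, v)} ⊔ fromEdgeSet {s(c, d)}).Reachable a b :=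
          fun h => h.mono le_sup_left
        have hdv : (H.deleteEdges {s(u, v)}).Reachable d v := by
          rcases reach_or (hconn.preconnected d u) with h | h
          · exact absurd h.symm hnud
          · exact h
        have hreachu'' : ∀ w, (H.deleteEdges {s(u, v)} ⊔ fromEdgeSet {s(c, d)}).Reachable w u := by
          intro w
          rcases reach_or (hconn.preconnected w u) with h | h
          · exact hmono h
          · exact (hmono h).trans ((hmono hdv.symm).trans
              ((hH''cd.symm.reachable).trans (hmono huc.symm)))
        have hconn'' : (H.deleteEdges {s(u, v)} ⊔ fromEdgeSet {s(c, d)}).Connected := by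
          rw [connected_iff]
          exact ⟨fun a b => (hreachu'' a).trans (hreachu'' b).symm, hconn.nonempty⟩
        have hEF'' : EF (H.deleteEdges {s(u, v)} ⊔ fromEdgeSet {s(c, d)}) =
            insert s(c, d) ((EF H).erase s(u, v)) := by
          rw [EF_sup_edge _ hTcd.ne, EF_delete]
        have hcdT : s(c, d) ∈ EF T := mem_EF.mpr ((mem_edgeSet _).mpr hTcd)
        have hsub'' : EF (H.deleteEdges {s(u, v)} ⊔ fromEdgeSet {s(c, d)}) \ EF T ⊆
            (EF H \ EF T).erase s(u, v) := by
          intro e he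
          rw [Finset.mem_sdiff, hEF'', Finset.mem_insert, Finset.mem_erase] at he
          rcases he with ⟨rfl | ⟨hne, heH⟩, hnT⟩
          · exact absurd hcdT hnT
          · exact Finset.mem_erase.mpr ⟨hne, Finset.mem_sdiff.mpr ⟨heH, hnT⟩⟩
        have hcard'' : (EF (H.deleteEdges {s(u, v)} ⊔ fromEdgeSet {s(c, d)}) \ EF T).card ≤ n := by
          have h1 := Finset.card_le_card hsub''
          rw [Finset.card_erase_of_mem hfdiff] at h1
          omega
        have hle := ih _ hcard'' hconn''
        have hcd_not : s(c, d) ∉ (EF H).erase s(u, v) := by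
          intro h
          exact hHcd ((mem_edgeSet _).mp (mem_EF.mp (Finset.mem_of_mem_erase h)))
        have hsum'' : totalWeight (H.deleteEdges {s(u, v)} ⊔ fromEdgeSet {s(c, d)}) =
            ew s(c, d) + ∑ e ∈ (EF H).erase s(u, v), ew e := by
          rw [totalWeight_eq, hEF'', Finset.sum_insert hcd_not]
        have hsumH : totalWeight H = ∑ e ∈ (EF H).erase s(u, v), ew e + ew s(u, v) := by
          rw [totalWeight_eq]
          exact (Finset.sum_erase_add _ _ hfH).symm
        have hwcd : ew (s(c, d) : Sym2 Y) = dist c d := rfl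
        have hwuv : ew (s(u, v) : Sym2 Y) = dist u v := rfl
        have : totalWeight (H.deleteEdges {s(u, v)} ⊔ fromEdgeSet {s(c, d)}) ≤ totalWeight H := by
          rw [hsum'', hsumH, hwcd, hwuv]
          linarith
        linarith

end Metric

end MstAux

open MstAux SimpleGraph

section Interface

variable [DecidableEq X] {G : SimpleGraph X}

lemma isMaxClique_coe_iff {S : Finset X} : MCIn G Finset.univ S ↔ IsMaxClique G ↑S := by
  constructor
  · rintro ⟨-, hcl, hmax⟩
    refine ⟨hcl, fun t htc hst => ?_⟩
    have hco : ((Set.toFinite t).toFinset : Set X) = t := Set.Finite.coe_toFinset _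
    have h1 : G.IsClique ↑(Set.toFinite t).toFinset := by rw [hco]; exact htc
    have h2 : (S : Set X) ⊆ ((Set.toFinite t).toFinset : Set X) := by rw [hco]; exact hst
    have h3 : S ⊆ (Set.toFinite t).toFinset := by exact_mod_cast h2
    have h4 := hmax _ (Finset.subset_univ _) h1 h3
    rw [← hco, h4]
  · rintro ⟨hcl, hmax⟩
    refine ⟨Finset.subset_univ _, hcl, fun t _ htc hst => ?_⟩
    have h1 : (t : Set X) = ↑S := hmax ↑t htc (by exact_mod_cast hst)
    exact_mod_cast h1

lemma pair_clique {x y : X} (h : G.Adj x y) : G.IsClique ({x, y} : Set X) := by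
  intro a ha b hb hab
  rcases ha with rfl | ha <;> rcases hb with rfl | hb
  · exact absurd rfl hab
  · rw [Set.mem_singleton_iff] at hb; subst hb; exact h
  · rw [Set.mem_singleton_iff] at ha; subst ha; exact h.symm
  · rw [Set.mem_singleton_iff] at ha hb; subst ha; subst hb; exact absurd rfl hab

lemma common_nbr_of_exposed {x y : X} (h : IsExposedEdge G x y) :
    ∃ z, G.Adj x z ∧ G.Adj y z := by
  obtain ⟨hadj, -, hnf⟩ := h
  have hcl : G.IsClique ({x, y} : Set X) := pair_clique hadj
  have hnm : ¬ IsMaxClique G {x, y} := fun hm => hnf ⟨hadj, hm⟩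
  rw [IsMaxClique, not_and] at hnm
  push_neg at hnm
  obtain ⟨t, htc, hsub, hne⟩ := hnm hcl
  obtain ⟨z, hzt, hz⟩ := Set.exists_of_ssubset ⟨hsub, fun hh => hne (le_antisymm hh hsub)⟩
  have hzx : z ≠ x := fun hh => hz (hh ▸ Set.mem_insert _ _)
  have hzy : z ≠ y := fun hh => hz (by rw [hh]; simp)
  exact ⟨z, htc (hsub (Set.mem_insert _ _)) hzt (Ne.symm hzx),
    htc (hsub (by simp)) hzt (Ne.symm hzy)⟩

lemma expIn_univ_isExposed {u v : X} (h : ExpIn G Finset.univ u v) : IsExposedEdge G u v := by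
  obtain ⟨hadj, -, -, ⟨z, -, hz1, hz2⟩, ⟨S, ⟨hS, hu, hv⟩, huniq⟩⟩ := h
  refine ⟨hadj, ?_, ?_⟩
  · refine ⟨↑S, ⟨isMaxClique_coe_iff.mp hS, by exact_mod_cast hu, by exact_mod_cast hv⟩, ?_⟩
    rintro S' ⟨hS', hu', hv'⟩
    have hco : ((Set.toFinite S').toFinset : Set X) = S' := Set.Finite.coe_toFinset _
    have h1 : MCIn G Finset.univ (Set.toFinite S').toFinset := by
      rw [isMaxClique_coe_iff, hco]; exact hS'
    have h2 := huniq (Set.toFinite S').toFinset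
      ⟨h1, by rw [Set.Finite.mem_toFinset]; exact hu', by rw [Set.Finite.mem_toFinset]; exact hv'⟩
    rw [← hco, h2]
  · rintro ⟨-, hmc, hmax⟩
    have htc : G.IsClique ({u, v, z} : Set X) := by
      intro a ha b hb hab
      simp only [Set.mem_insert_iff, Set.mem_singleton_iff] at ha hb
      rcases ha with rfl | rfl | rfl <;> rcases hb with rfl | rfl | rfl <;>
        first
          | exact absurd rfl hab
          | exact hadj | exact hadj.symm | exact hz1 | exact hz1.symm
          | exact hz2 | exact hz2.symm
    have hsub : ({u, v} : Set X) ⊆ {u, v, z} := by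
      intro a ha
      simp only [Set.mem_insert_iff, Set.mem_singleton_iff] at ha ⊢
      tauto
    have heq := hmax _ htc hsub
    have hzm : z ∈ ({u, v} : Set X) := by
      rw [← heq]; simp
    rcases hzm with rfl | hzm
    · exact G.loopless.irrefl _ hz1
    · rw [Set.mem_singleton_iff] at hzm; subst hzm; exact G.loopless.irrefl _ hz2

lemma uce_of_exposed {x y : X} (h : IsExposedEdge G x y) : UCE G x y := by
  obtain ⟨hadj, ⟨S, ⟨hS, hx, hy⟩, huniq⟩, -⟩ := h
  refine ⟨(Set.toFinite S).toFinset, by rw [Set.Finite.coe_toFinset]; exact hS.1, ?_⟩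
  intro t htc hxt hyt
  obtain ⟨M, hM, htM⟩ := exists_MCIn (Finset.subset_univ t) htc
  have hMmax : IsMaxClique G ↑M := isMaxClique_coe_iff.mp hM
  have heq : (M : Set X) = S := huniq ↑M ⟨hMmax, by exact_mod_cast htM hxt, by exact_mod_cast htM hyt⟩
  intro a hat
  rw [Set.Finite.mem_toFinset, ← heq]
  exact_mod_cast htM hat

end Interface

/-- A maximal sequence of `d`-erasures starting from the complete graph on a finite
metric space terminates in a minimum spanning tree. -/
theorem maximal_dErasure_sequence_is_mst [Nonempty X] (m : ℕ)
    (Gs : ℕ → SimpleGraph X) (h0 : Gs 0 = ⊤)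
    (hstep : ∀ i < m, DErasure (Gs i) (Gs (i + 1)))
    (hmax : ∀ x y : X, ¬ IsExposedEdge (Gs m) x y) :
    (Gs m).IsTree ∧
      ∀ T' : SimpleGraph X, T'.IsTree → totalWeight (Gs m) ≤ totalWeight T' := by
  classical
  have key : ∀ i, i ≤ m → HS (Gs i) ∧ (Gs i).Connected ∧ Inv3 (Gs i) := by
    intro i
    induction i with
    | zero =>
      intro _
      rw [h0]
      refine ⟨HS_top, connected_top, ?_⟩
      intro u v hne hadj
      exact absurd ((top_adj u v).mpr hne) hadj
    | succ i ih =>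
      intro hi1
      have hlt : i < m := Nat.lt_of_lt_of_le (Nat.lt_succ_self i) hi1
      obtain ⟨hHS, hconn, hinv⟩ := ih (le_of_lt hlt)
      obtain ⟨x, y, hexp, hwt, hEq⟩ := hstep i hlt
      rw [hEq]
      have hxy : (Gs i).Adj x y := hexp.1
      obtain ⟨z, hxz, hyz⟩ := common_nbr_of_exposed hexp
      obtain ⟨wp, hwsupp, hwedge⟩ := exp_walk hHS (Finset.univ.card) Finset.univ x y z rfl
        (Finset.mem_univ x) (Finset.mem_univ y) (Finset.mem_univ z) hxy hxz hyz
      have hdetour : (lightSub ((Gs i).deleteEdges {s(x, y)}) (dist x y)).Reachable x y := by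
        apply reach_along wp
        intro e he c d heq
        obtain ⟨hne, u', v', hexpIn, heq'⟩ := hwedge e he
        have hexposed := expIn_univ_isExposed hexpIn
        have hwle : dist u' v' ≤ dist x y := hwt u' v' hexposed
        have hadj : (Gs i).Adj c d := (mem_edgeSet _).mp (wp.edges_subset_edgeSet (heq ▸ he))
        have hdcd : dist c d ≤ dist x y := by
          have hcd : s(c, d) = s(u', v') := by rw [← heq, ← heq']
          rcases Sym2.eq_iff.mp hcd with ⟨rfl, rfl⟩ | ⟨rfl, rfl⟩
          · exact hwle
          · exact le_of_eq_of_le (dist_comm c d) hwle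
        have hne' : s(c, d) ≠ s(x, y) := heq ▸ hne
        refine ⟨?_, hdcd⟩
        rw [deleteEdges_adj]
        exact ⟨hadj, by simpa using hne'⟩
      have hdeled : ((Gs i).deleteEdges {s(x, y)}).Reachable x y :=
        hdetour.mono lightSub_le
      have hconn' : ((Gs i).deleteEdges {s(x, y)}).Connected := by
        rw [connected_iff]
        refine ⟨?_, hconn.nonempty⟩
        intro a b
        refine reachable_transfer ?_ (hconn.preconnected a b)
        intro a' b' hadj'
        by_cases heq : s(a', b') = s(x, y)
        · rcases Sym2.eq_iff.mp heq with ⟨rfl, rfl⟩ | ⟨rfl, rfl⟩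
          · exact hdeled
          · exact hdeled.symm
        · refine Adj.reachable ?_
          rw [deleteEdges_adj]
          exact ⟨hadj', by simpa using heq⟩
      have hinv' : Inv3 ((Gs i).deleteEdges {s(x, y)}) := by
        intro u v hne huv'
        by_cases hGuv : (Gs i).Adj u v
        · have heq : s(u, v) = s(x, y) := by
            by_contra hne2
            apply huv'
            rw [deleteEdges_adj]
            exact ⟨hGuv, by simpa using hne2⟩
          rcases Sym2.eq_iff.mp heq with ⟨h1, h2⟩ | ⟨h1, h2⟩
          · rw [h1, h2]; exact hdetour
          · rw [h1, h2, dist_comm y x]; exact hdetour.symm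
        · refine reachable_transfer ?_ (hinv u v hne hGuv)
          intro a b hab
          by_cases heq : s(a, b) = s(x, y)
          · have hxyle : dist x y ≤ dist u v := by
              rcases Sym2.eq_iff.mp heq with ⟨rfl, rfl⟩ | ⟨rfl, rfl⟩
              · exact hab.2
              · exact le_of_eq_of_le (dist_comm a b).symm hab.2
            have hxyreach := hdetour.mono (lightSub_mono hxyle)
            rcases Sym2.eq_iff.mp heq with ⟨rfl, rfl⟩ | ⟨rfl, rfl⟩
            · exact hxyreach
            · exact hxyreach.symm
          · refine Adj.reachable ?_
            refine ⟨?_, hab.2⟩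
            rw [deleteEdges_adj]
            exact ⟨hab.1, by simpa using heq⟩
      exact ⟨HS_delete hHS hxy (uce_of_exposed hexp), hconn', hinv'⟩
  obtain ⟨hHSm, hconnm, hinvm⟩ := key m le_rfl
  have hfac : ∀ a b z : X, (Gs m).Adj a b → (Gs m).Adj a z → (Gs m).Adj b z → False := by
    intro a b z hab haz hbz
    obtain ⟨wp, hwsupp, hwedge⟩ := exp_walk hHSm (Finset.univ.card) Finset.univ a b z rfl
      (Finset.mem_univ a) (Finset.mem_univ b) (Finset.mem_univ z) hab haz hbz
    cases wp with
    | nil => exact (Gs m).loopless.irrefl a hab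
    | @cons _ c _ h p =>
      obtain ⟨-, u', v', hexpIn, -⟩ := hwedge s(a, c)
        (by rw [Walk.edges_cons]; exact List.mem_cons_self)
      exact hmax u' v' (expIn_univ_isExposed hexpIn)
  have hacyc : (Gs m).IsAcyclic :=
    acyclic_of_HS_trianglefree hHSm (fun x y z h1 h2 h3 => hfac x y z h1 h2 h3)
  refine ⟨⟨hconnm, hacyc⟩, ?_⟩
  intro T' hT'
  exact tw_le_of_connected hacyc hinvm ((EF T' \ EF (Gs m)).card) T' le_rfl hT'.1
end
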